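/- arXiv:2506.12940 — 3 statements merged into one kernel-verified Lean document; each statement's English description precedes it below -/
import Mathlib

section
/- Let f, g : K → 𝕋 be continuous maps from the Sierpinski gasket to the circle. Then f and g are homotopic (i.e., there exists a continuous F : [0,1] × K → 𝕋 with F(0,·) = f and F(1,·) = g) if and only if ω_w(f) = ω_w(g) for every word w ∈ ⋃_{n≥0} {1,2,3}^n (including the empty word). -/
open Filter
open scoped ENNReal

noncomputable section

/-- Vertices of the base triangle. -/
def sgv1 : ℝ × ℝ := (0, 0)
def sgv2 : ℝ × ℝ := (1/2, Real.sqrt 3 / 2)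
def sgv3 : ℝ × ℝ := (1, 0)

def sgvtx : Fin 3 → ℝ × ℝ
  | 0 => sgv1
  | 1 => sgv2
  | 2 => sgv3

/-- The contraction `F_i(x) = (x - v_i)/2 + v_i = (x + v_i)/2`. -/
def sgF (i : Fin 3) (x : ℝ × ℝ) : ℝ × ℝ := (1/2 : ℝ) • (x + sgvtx i)

/-- `F_w = F_{w₁} ∘ ⋯ ∘ F_{wₙ}` (empty word gives the identity). -/
def sgFw (w : List (Fin 3)) : ℝ × ℝ → ℝ × ℝ :=
  w.foldr (fun i g => sgF i ∘ g) id

instance : DecidableEq (ℝ × ℝ) := Classical.decEq _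

/-- The vertex sets `Vₙ`. -/
def sgV : ℕ → Finset (ℝ × ℝ)
  | 0 => {sgv1, sgv2, sgv3}
  | n + 1 => Finset.univ.biUnion fun i : Fin 3 => (sgV n).image (sgF i)

/-- Adjacency on `Γₙ`: distinct points lying in a common image `F_w(V₀)`, `|w| = n`. -/
def sgAdj (n : ℕ) (x y : ℝ × ℝ) : Prop :=
  x ≠ y ∧ ∃ w : List (Fin 3), w.length = n ∧
    x ∈ (sgV 0).image (sgFw w) ∧ y ∈ (sgV 0).image (sgFw w)

open Classical in
/-- Discrete Dirichlet energy `ℰₙ` (each undirected edge counted once: we sum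
over ordered pairs and halve). -/
def sgE (n : ℕ) (f : ℝ × ℝ → ℝ) : ℝ :=
  (5/3 : ℝ) ^ n * ((1:ℝ)/2) *
    ∑ x ∈ sgV n, ∑ y ∈ sgV n, if sgAdj n x y then (f y - f x) ^ 2 / 2 else 0

open Classical in
/-- Discrete Kuramoto energy `𝒥ₙ` (each undirected edge counted once). -/
def sgJ (n : ℕ) (f : ℝ × ℝ → ℝ) : ℝ :=
  (5/3 : ℝ) ^ n * (1 / (4 * Real.pi ^ 2)) * ((1:ℝ)/2) *
    ∑ x ∈ sgV n, ∑ y ∈ sgV n,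
      if sgAdj n x y then 1 - Real.cos (2 * Real.pi * (f y - f x)) else 0

open Classical in
/-- Discrete Laplacian `Δₘ`. -/
def sgLap (m : ℕ) (f : ℝ × ℝ → ℝ) (x : ℝ × ℝ) : ℝ :=
  (5/3 : ℝ) ^ m * ∑ y ∈ sgV m, if sgAdj m x y then f y - f x else 0

/-- `ℰ(f) = supₙ ℰₙ(f) ∈ [0,∞]`. -/
def sgEtot (f : ℝ × ℝ → ℝ) : ℝ≥0∞ :=
  ⨆ n : ℕ, ENNReal.ofReal (sgE n f)

/-- The circle `𝕋 = ℝ/ℤ`. -/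
abbrev 𝕋c := AddCircle (1 : ℝ)

/-- `HasWinding c k`: the loop `c : [0,1] → 𝕋` admits a continuous lift `ĉ` with
`ĉ(1) - ĉ(0) = k`. -/
def HasWinding (c : ℝ → 𝕋c) (k : ℤ) : Prop :=
  ∃ ch : ℝ → ℝ, ContinuousOn ch (Set.Icc 0 1) ∧
    (∀ t ∈ Set.Icc (0:ℝ) 1, ((ch t : ℝ) : 𝕋c) = c t) ∧ ch 1 - ch 0 = (k : ℝ)

/-- Constant-speed clockwise parametrization of `∂T` starting at the leftmost
vertex `v₁`, passing through `v₂` and then `v₃`. -/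
def sgc0 (t : ℝ) : ℝ × ℝ :=
  if t ≤ 1/3 then sgv1 + (3 * t) • (sgv2 - sgv1)
  else if t ≤ 2/3 then sgv2 + (3 * t - 1) • (sgv3 - sgv2)
  else sgv3 + (3 * t - 2) • (sgv1 - sgv3)

/-- Constant-speed clockwise parametrization of `∂T_w` starting at its leftmost
vertex `F_w(v₁)`. -/
def sgcw (w : List (Fin 3)) (t : ℝ) : ℝ × ℝ := sgFw w (sgc0 t)


instance : Fact ((0:ℝ) < 1) := ⟨one_pos⟩

/-- `cos(2πθ)` for `θ ∈ 𝕋` (well defined via any representative). -/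
def cosT (θ : 𝕋c) : ℝ :=
  Real.cos (2 * Real.pi * ((AddCircle.equivIco 1 0 θ : ℝ)))

open Classical in
/-- The `𝕋`-valued Kuramoto energy `𝒥ₙ` (each undirected edge counted once). -/
def sgJT (n : ℕ) (u : ℝ × ℝ → 𝕋c) : ℝ :=
  (5/3 : ℝ) ^ n * (1 / (4 * Real.pi ^ 2)) * ((1:ℝ)/2) *
    ∑ x ∈ sgV n, ∑ y ∈ sgV n,
      if sgAdj n x y then 1 - cosT (u y - u x) else 0

/-! ### Auxiliary lemmas on the circle, lifts and winding numbers -/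

open Set

namespace SGaux

/-- The representative of `θ : 𝕋` in `[-1/2, 1/2)`. -/
def trep (θ : 𝕋c) : ℝ := (AddCircle.equivIco 1 (-(2⁻¹):ℝ) θ : ℝ)

lemma trep_coe (θ : 𝕋c) : ((trep θ : ℝ) : 𝕋c) = θ :=
  (AddCircle.equivIco 1 (-(2⁻¹):ℝ)).symm_apply_apply θ

lemma trep_mem (θ : 𝕋c) : trep θ ∈ Ico (-(2⁻¹):ℝ) (2⁻¹) := by
  have h := (AddCircle.equivIco 1 (-(2⁻¹):ℝ) θ).2
  simpa [trep, show (-(2⁻¹):ℝ) + 1 = 2⁻¹ by norm_num] using h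

lemma norm_half : ‖((-(2⁻¹) : ℝ) : 𝕋c)‖ = 2⁻¹ := by
  rw [AddCircle.norm_eq]
  have : round ((1:ℝ)⁻¹ * (-(2⁻¹))) = 0 := by rw [round_eq]; norm_num
  rw [this]; norm_num

lemma ne_half_of_norm_lt {θ : 𝕋c} (h : ‖θ‖ < 2⁻¹) : θ ≠ ((-(2⁻¹):ℝ) : 𝕋c) := by
  intro he; rw [he, norm_half] at h; exact lt_irrefl _ h

lemma abs_trep_lt {θ : 𝕋c} (h : ‖θ‖ < 2⁻¹) : |trep θ| < 2⁻¹ := by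
  have hm := trep_mem θ
  rcases eq_or_lt_of_le hm.1 with he | hl
  · exfalso
    apply ne_half_of_norm_lt h
    rw [← trep_coe θ, ← he]
  · rw [abs_lt]; exact ⟨hl, hm.2⟩

lemma continuousAt_trep {θ : 𝕋c} (h : ‖θ‖ < 2⁻¹) : ContinuousAt trep θ :=
  continuous_subtype_val.continuousAt.comp
    (AddCircle.continuousAt_equivIco 1 (-(2⁻¹):ℝ) (ne_half_of_norm_lt h))

lemma coe_int_eq_zero (n : ℤ) : (((n : ℝ)) : 𝕋c) = 0 := by
  rw [AddCircle.coe_eq_zero_iff]; exact ⟨n, by simp⟩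

lemma exists_int_of_coe_eq_zero {x : ℝ} (h : ((x : ℝ) : 𝕋c) = 0) : ∃ n : ℤ, (n : ℝ) = x := by
  rw [AddCircle.coe_eq_zero_iff] at h
  obtain ⟨n, hn⟩ := h; exact ⟨n, by simpa using hn⟩

/-- Local lifting: a continuous circle-valued map with values in a half-ball lifts. -/
lemma lift_small {X : Type*} [TopologicalSpace X] {u : X → 𝕋c} {S : Set X}
    (hu : ContinuousOn u S) (θ₀ : ℝ) (h : ∀ x ∈ S, ‖u x - (θ₀ : 𝕋c)‖ < 2⁻¹) :
    ∃ U : X → ℝ, ContinuousOn U S ∧ (∀ x ∈ S, ((U x : ℝ) : 𝕋c) = u x) ∧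
      ∀ x ∈ S, |U x - θ₀| < 2⁻¹ := by
  refine ⟨fun x => θ₀ + trep (u x - (θ₀ : 𝕋c)), ?_, ?_, ?_⟩
  · apply ContinuousOn.add continuousOn_const
    intro x hx
    have h1 : ContinuousWithinAt (fun y => u y - (θ₀:𝕋c)) S x :=
      (hu x hx).sub continuousWithinAt_const
    have h2 : ContinuousAt trep (u x - (θ₀:𝕋c)) := continuousAt_trep (h x hx)
    have h3 : ContinuousWithinAt (trep ∘ fun y => u y - (θ₀:𝕋c)) S x :=
      ContinuousAt.comp_continuousWithinAt h2 h1
    exact h3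
  · intro x hx
    have : ((trep (u x - (θ₀:𝕋c)) : ℝ) : 𝕋c) = u x - (θ₀:𝕋c) := trep_coe _
    calc ((θ₀ + trep (u x - (θ₀:𝕋c)) : ℝ) : 𝕋c)
        = (θ₀ : 𝕋c) + ((trep (u x - (θ₀:𝕋c)) : ℝ) : 𝕋c) := rfl
      _ = (θ₀ : 𝕋c) + (u x - (θ₀:𝕋c)) := by rw [this]
      _ = u x := by abel
  · intro x hx
    simpa using abs_trep_lt (h x hx)

/-- Gluing two lifts on closed sets which agree on the intersection. -/
lemma glue_lifts {X : Type*} [TopologicalSpace X] {A B : Set X} (hA : IsClosed A)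
    (hB : IsClosed B) {u : X → 𝕋c} {la lb : X → ℝ}
    (hla : ContinuousOn la A) (hlb : ContinuousOn lb B)
    (ea : ∀ x ∈ A, ((la x : ℝ) : 𝕋c) = u x) (eb : ∀ x ∈ B, ((lb x : ℝ) : 𝕋c) = u x)
    (hagree : ∀ x ∈ A ∩ B, la x = lb x) :
    ∃ L : X → ℝ, ContinuousOn L (A ∪ B) ∧ (∀ x ∈ A ∪ B, ((L x : ℝ) : 𝕋c) = u x) ∧
      (∀ x ∈ A, L x = la x) ∧ ∀ x ∈ B, L x = lb x := by
  classical
  refine ⟨fun x => if x ∈ A then la x else lb x, ?_, ?_, ?_, ?_⟩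
  · intro x hx
    have hcA : ∀ y ∈ A, (fun x => if x ∈ A then la x else lb x) y = la y := by
      intro y hy; simp [hy]
    have hcB : ∀ y ∈ B, (fun x => if x ∈ A then la x else lb x) y = lb y := by
      intro y hy
      by_cases hyA : y ∈ A
      · simp [hyA, hagree y ⟨hyA, hy⟩]
      · simp [hyA]
    have h1 : ContinuousWithinAt (fun x => if x ∈ A then la x else lb x) A x := by
      by_cases hxA : x ∈ A
      · exact ((hla x hxA).congr hcA (hcA x hxA))
      · exact continuousWithinAt_of_notMem_closure (by rwa [hA.closure_eq])
    have h2 : ContinuousWithinAt (fun x => if x ∈ A then la x else lb x) B x := by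
      by_cases hxB : x ∈ B
      · exact ((hlb x hxB).congr hcB (hcB x hxB))
      · exact continuousWithinAt_of_notMem_closure (by rwa [hB.closure_eq])
    exact h1.union h2
  · intro x hx
    by_cases hxA : x ∈ A
    · simp only [hxA, if_pos]; exact ea x hxA
    · have hxB : x ∈ B := hx.resolve_left hxA
      simp only [hxA, if_neg, if_false]; exact eb x hxB
  · intro x hx; simp [hx]
  · intro x hx
    by_cases hxA : x ∈ A
    · simp [hxA, hagree x ⟨hxA, hx⟩]
    · simp [hxA]

end SGaux

namespace SGaux

lemma int_abs_lt_one {n : ℤ} (h : |(n:ℝ)| < 1) : n = 0 := by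
  by_contra hn
  have : (1:ℝ) ≤ |(n:ℝ)| := by
    rw [← Int.cast_abs]
    exact_mod_cast Int.one_le_abs (by omega)
  linarith

lemma icc_inter (a b : ℝ) (h0 : (0:ℝ) ≤ a) (hab : a ≤ b) :
    Icc (0:ℝ) a ∩ Icc a b = {a} := by
  ext x
  simp only [Set.mem_inter_iff, Set.mem_Icc, Set.mem_singleton_iff]
  constructor
  · rintro ⟨⟨_, h1⟩, h2, _⟩; linarith
  · rintro rfl; exact ⟨⟨h0, le_refl _⟩, le_refl _, hab⟩

lemma coe_sub_T (x y : ℝ) : ((x - y : ℝ) : 𝕋c) = ((x:ℝ):𝕋c) - ((y:ℝ):𝕋c) := rfl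
lemma coe_add_T (x y : ℝ) : ((x + y : ℝ) : 𝕋c) = ((x:ℝ):𝕋c) + ((y:ℝ):𝕋c) := rfl

/-- Path lifting along the unit interval. -/
lemma lift_on_icc {c : ℝ → 𝕋c} (hc : ContinuousOn c (Icc 0 1)) :
    ∃ ch : ℝ → ℝ, ContinuousOn ch (Icc 0 1) ∧
      ∀ t ∈ Icc (0:ℝ) 1, ((ch t : ℝ) : 𝕋c) = c t := by
  obtain ⟨δ, hδ, hu⟩ : ∃ δ > 0, ∀ x ∈ Icc (0:ℝ) 1, ∀ y ∈ Icc (0:ℝ) 1,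
      dist x y < δ → ‖c x - c y‖ < 2⁻¹ := by
    have := isCompact_Icc.uniformContinuousOn_of_continuous hc
    rw [Metric.uniformContinuousOn_iff] at this
    obtain ⟨δ, h1, h2⟩ := this 2⁻¹ (by norm_num)
    exact ⟨δ, h1, fun x hx y hy hxy => by
      have := h2 x hx y hy hxy; rwa [dist_eq_norm] at this⟩
  obtain ⟨N, hN⟩ := exists_nat_one_div_lt hδ
  set M : ℝ := (N:ℝ) + 1 with hM
  have hM0 : (0:ℝ) < M := by positivity
  have key : ∀ k : ℕ, (k:ℝ) ≤ M → ∃ ch : ℝ → ℝ,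
      ContinuousOn ch (Icc 0 ((k:ℝ)/M)) ∧
      ∀ t ∈ Icc (0:ℝ) ((k:ℝ)/M), ((ch t : ℝ) : 𝕋c) = c t := by
    intro k
    induction k with
    | zero =>
      intro _
      simp only [Nat.cast_zero, zero_div]
      have hsmall0 : ∀ x ∈ Icc (0:ℝ) 0, ‖c x - ((trep (c 0) : ℝ) : 𝕋c)‖ < 2⁻¹ := by
        intro x hx
        have hx0 : x = 0 := le_antisymm hx.2 hx.1
        rw [hx0, trep_coe, sub_self, norm_zero]
        norm_num
      obtain ⟨U, h1, h2, -⟩ := lift_small (u := c) (S := Icc (0:ℝ) 0)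
        (hc.mono (fun x hx => ⟨hx.1, le_trans hx.2 zero_le_one⟩)) (trep (c 0)) hsmall0
      exact ⟨U, h1, h2⟩
    | succ k ih =>
      intro hk1
      have hkM : (k:ℝ) ≤ M := by push_cast at hk1 ⊢; linarith
      obtain ⟨la, hla, hea⟩ := ih hkM
      set t₀ : ℝ := (k:ℝ)/M with ht₀def
      set t₁ : ℝ := ((k:ℝ)+1)/M with ht₁def
      have h00 : (0:ℝ) ≤ t₀ := by positivity
      have h0t1 : t₀ ≤ t₁ := by
        exact (div_le_div_iff_of_pos_right hM0).mpr (by linarith)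
      have ht11 : t₁ ≤ 1 := by
        rw [div_le_one hM0]; push_cast at hk1; linarith
      have ht00 : t₀ ∈ Icc (0:ℝ) 1 := ⟨h00, le_trans h0t1 ht11⟩
      have hsubB : Icc t₀ t₁ ⊆ Icc (0:ℝ) 1 := fun x hx =>
        ⟨le_trans h00 hx.1, le_trans hx.2 ht11⟩
      have hsubA : Icc (0:ℝ) t₀ ⊆ Icc (0:ℝ) 1 := fun x hx =>
        ⟨hx.1, le_trans hx.2 ht00.2⟩
      have hsmall : ∀ x ∈ Icc t₀ t₁, ‖c x - ((trep (c t₀) : ℝ) : 𝕋c)‖ < 2⁻¹ := by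
        intro x hx
        rw [trep_coe]
        apply hu x (hsubB hx) t₀ ht00
        rw [Real.dist_eq]
        have h1 : |x - t₀| ≤ t₁ - t₀ := by
          rw [abs_le]; exact ⟨by linarith [hx.1, h0t1], by linarith [hx.2]⟩
        have h2 : t₁ - t₀ = 1/M := by
          rw [ht₁def, ht₀def, div_sub_div_same]; norm_num
        calc |x - t₀| ≤ 1/M := by rw [← h2]; exact h1
          _ < δ := by rw [hM]; exact hN
      obtain ⟨lb0, hlb0, heb0, -⟩ := lift_small (hc.mono hsubB) (trep (c t₀)) hsmall
      set s : ℝ := la t₀ - lb0 t₀ with hsdef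
      have hs0 : ((s:ℝ):𝕋c) = 0 := by
        have h1 : ((la t₀:ℝ):𝕋c) = c t₀ := hea t₀ ⟨h00, le_refl _⟩
        have h2 : ((lb0 t₀:ℝ):𝕋c) = c t₀ := heb0 t₀ ⟨le_refl _, h0t1⟩
        rw [hsdef, coe_sub_T, h1, h2, sub_self]
      have heb : ∀ x ∈ Icc t₀ t₁, (((lb0 x + s : ℝ)) : 𝕋c) = c x := by
        intro x hx
        rw [coe_add_T, hs0, add_zero]
        exact heb0 x hx
      have hagree : ∀ x ∈ Icc (0:ℝ) t₀ ∩ Icc t₀ t₁, la x = lb0 x + s := by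
        intro x hx
        rw [icc_inter t₀ t₁ h00 h0t1] at hx
        rw [Set.mem_singleton_iff] at hx
        rw [hx, hsdef]; ring
      obtain ⟨L, hL, heL, -, -⟩ := glue_lifts isClosed_Icc isClosed_Icc hla
        (hlb0.add continuousOn_const) hea heb hagree
      rw [Set.Icc_union_Icc_eq_Icc h00 h0t1] at hL heL
      have hcast : ((k+1:ℕ):ℝ)/M = t₁ := by push_cast; rfl
      refine ⟨L, ?_, ?_⟩
      · rw [hcast]; exact hL
      · rw [hcast]; exact heL
  have hNM : ((N+1:ℕ):ℝ) ≤ M := by push_cast; rw [hM]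
  obtain ⟨ch, h1, h2⟩ := key (N+1) hNM
  have : ((N+1:ℕ):ℝ)/M = 1 := by
    push_cast; rw [hM]; field_simp
  rw [this] at h1 h2
  exact ⟨ch, h1, h2⟩

end SGaux

namespace SGaux

lemma zero_mem_icc : (0:ℝ) ∈ Icc (0:ℝ) 1 := ⟨le_refl _, zero_le_one⟩
lemma one_mem_icc : (1:ℝ) ∈ Icc (0:ℝ) 1 := ⟨zero_le_one, le_refl _⟩

/-- A loop has some winding number. -/
lemma exists_winding {c : ℝ → 𝕋c} (hc : ContinuousOn c (Icc 0 1)) (hloop : c 0 = c 1) :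
    ∃ k : ℤ, HasWinding c k := by
  obtain ⟨ch, h1, h2⟩ := lift_on_icc hc
  have : ((ch 1 - ch 0 : ℝ) : 𝕋c) = 0 := by
    rw [coe_sub_T, h2 0 zero_mem_icc, h2 1 one_mem_icc, hloop, sub_self]
  obtain ⟨n, hn⟩ := exists_int_of_coe_eq_zero this
  exact ⟨n, ch, h1, h2, hn.symm⟩

/-- Any two lifts of the same loop have the same increment. -/
lemma lift_increment_unique {c : ℝ → 𝕋c} {ch ch' : ℝ → ℝ}
    (h1 : ContinuousOn ch (Icc 0 1)) (h2 : ∀ t ∈ Icc (0:ℝ) 1, ((ch t : ℝ) : 𝕋c) = c t)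
    (h1' : ContinuousOn ch' (Icc 0 1)) (h2' : ∀ t ∈ Icc (0:ℝ) 1, ((ch' t : ℝ) : 𝕋c) = c t) :
    ch 1 - ch 0 = ch' 1 - ch' 0 := by
  set D : ℝ → ℝ := fun t => ch t - ch' t with hD
  have hDc : ContinuousOn D (Icc 0 1) := h1.sub h1'
  have hD0 : ∀ t ∈ Icc (0:ℝ) 1, ((D t : ℝ) : 𝕋c) = 0 := by
    intro t ht
    rw [hD]
    show ((ch t - ch' t : ℝ) : 𝕋c) = 0
    rw [coe_sub_T, h2 t ht, h2' t ht, sub_self]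
  have hint : ∀ t ∈ Icc (0:ℝ) 1, ∃ n : ℤ, (n:ℝ) = D t := fun t ht =>
    exists_int_of_coe_eq_zero (hD0 t ht)
  obtain ⟨n0, hn0⟩ := hint 0 zero_mem_icc
  obtain ⟨n1, hn1⟩ := hint 1 one_mem_icc
  have key : D 1 = D 0 := by
    by_contra hne
    have hne' : n0 ≠ n1 := by
      intro h; apply hne; rw [← hn0, ← hn1, h]
    have habs : ∃ t ∈ Icc (0:ℝ) 1, ∃ m : ℤ, (m:ℝ) = (n0:ℝ) + 2⁻¹ := by
      rcases le_total (D 0) (D 1) with hle | hle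
      · have hlt : (n0:ℝ) + 1 ≤ (n1:ℝ) := by
          have : n0 < n1 := by
            rcases lt_or_eq_of_le (by exact_mod_cast (hn0 ▸ hn1 ▸ hle : (n0:ℝ) ≤ (n1:ℝ))) with h | h
            · exact h
            · exact absurd h hne'
          exact_mod_cast this
        have hmem : D 0 + 2⁻¹ ∈ Icc (D 0) (D 1) := by
          constructor
          · linarith
          · rw [← hn0, ← hn1]; linarith
        obtain ⟨t, ht, hDt⟩ := intermediate_value_Icc zero_le_one hDc hmem
        refine ⟨t, ht, ?_⟩
        obtain ⟨m, hm⟩ := hint t ht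
        exact ⟨m, by rw [hm, hDt, ← hn0]⟩
      · have hlt : (n1:ℝ) + 1 ≤ (n0:ℝ) := by
          have : n1 < n0 := by
            rcases lt_or_eq_of_le (by exact_mod_cast (hn0 ▸ hn1 ▸ hle : (n1:ℝ) ≤ (n0:ℝ))) with h | h
            · exact h
            · exact absurd h.symm hne'
          exact_mod_cast this
        have hmem : D 0 - 2⁻¹ ∈ Icc (D 1) (D 0) := by
          constructor
          · rw [← hn0, ← hn1]; linarith
          · linarith
        obtain ⟨t, ht, hDt⟩ := intermediate_value_Icc' zero_le_one hDc hmem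
        refine ⟨t, ht, ?_⟩
        obtain ⟨m, hm⟩ := hint t ht
        refine ⟨m + 1, ?_⟩
        push_cast
        rw [hm, hDt, ← hn0]; ring
    obtain ⟨t, ht, m, hm⟩ := habs
    have : ((m - n0 : ℤ) : ℝ) = 2⁻¹ := by push_cast; linarith
    have h1 : |((m - n0 : ℤ) : ℝ)| < 1 := by
      rw [this, abs_of_pos (by norm_num : (0:ℝ) < 2⁻¹)]; norm_num
    have h2 := int_abs_lt_one h1
    rw [h2] at this
    norm_num at this
  rw [hD] at key
  simp only at key
  linarith
lemma winding_unique {c : ℝ → 𝕋c} {k k' : ℤ} (h : HasWinding c k) (h' : HasWinding c k') :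
    k = k' := by
  obtain ⟨ch, h1, h2, h3⟩ := h
  obtain ⟨ch', h1', h2', h3'⟩ := h'
  have := lift_increment_unique h1 h2 h1' h2'
  rw [h3, h3'] at this
  exact_mod_cast this

lemma hasWinding_congr {c c' : ℝ → 𝕋c} {k : ℤ} (h : ∀ t ∈ Icc (0:ℝ) 1, c t = c' t)
    (hw : HasWinding c k) : HasWinding c' k := by
  obtain ⟨ch, h1, h2, h3⟩ := hw
  exact ⟨ch, h1, fun t ht => (h2 t ht).trans (h t ht), h3⟩

lemma hasWinding_sub {c c' : ℝ → 𝕋c} {k k' : ℤ} (h : HasWinding c k) (h' : HasWinding c' k') :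
    HasWinding (fun t => c' t - c t) (k' - k) := by
  obtain ⟨ch, h1, h2, h3⟩ := h
  obtain ⟨ch', h1', h2', h3'⟩ := h'
  refine ⟨fun t => ch' t - ch t, h1'.sub h1, ?_, ?_⟩
  · intro t ht
    rw [coe_sub_T, h2 t ht, h2' t ht]
  · push_cast; rw [← h3, ← h3']; ring

/-- Uniformly close loops have equal winding numbers. -/
lemma close_winding {c c' : ℝ → 𝕋c} (hc : ContinuousOn c (Icc 0 1))
    (hc' : ContinuousOn c' (Icc 0 1)) (hl : c 0 = c 1) (hl' : c' 0 = c' 1)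
    (hclose : ∀ t ∈ Icc (0:ℝ) 1, ‖c' t - c t‖ < 2⁻¹) {k : ℤ}
    (h : HasWinding c k) : HasWinding c' k := by
  obtain ⟨ch, h1, h2, h3⟩ := h
  have hsmall : ∀ t ∈ Icc (0:ℝ) 1, ‖c' t - c t - ((0:ℝ):𝕋c)‖ < 2⁻¹ := by
    intro t ht
    have := hclose t ht
    simpa using this
  obtain ⟨U, hU1, hU2, hU3⟩ := lift_small (S := Icc (0:ℝ) 1)
    (u := fun t => c' t - c t) (hc'.sub hc) 0 hsmall
  have hU10 : U 1 = U 0 := by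
      have hcoe : ((U 1 - U 0 : ℝ) : 𝕋c) = 0 := by
        rw [coe_sub_T, hU2 1 one_mem_icc, hU2 0 zero_mem_icc, hl, hl', sub_self]
      obtain ⟨n, hn⟩ := exists_int_of_coe_eq_zero hcoe
      have : |(n:ℝ)| < 1 := by
        rw [hn]
        have b1 := hU3 1 one_mem_icc
        have b0 := hU3 0 zero_mem_icc
        rw [sub_zero] at b1 b0
        rw [abs_sub_lt_iff]
        have e1 := le_abs_self (U 1)
        have e2 := neg_abs_le (U 0)
        have e3 := le_abs_self (U 0)
        have e4 := neg_abs_le (U 1)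
        constructor
        · linarith
        · linarith
      have hn0 := int_abs_lt_one this
      rw [hn0] at hn
      have : U 1 - U 0 = 0 := by exact_mod_cast hn.symm
      linarith
  refine ⟨fun t => ch t + U t, h1.add hU1, ?_, ?_⟩
  · intro t ht
    rw [coe_add_T, h2 t ht, hU2 t ht]
    abel
  · show ch 1 + U 1 - (ch 0 + U 0) = (k:ℝ)
    rw [hU10, ← h3]; ring

end SGaux

namespace SGaux

lemma sgF_sub (i : Fin 3) (x y : ℝ × ℝ) : sgF i x - sgF i y = (1/2 : ℝ) • (x - y) := by
  simp only [sgF, smul_add]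
  module

lemma sgF_dist (i : Fin 3) (x y : ℝ × ℝ) : dist (sgF i x) (sgF i y) = dist x y / 2 := by
  rw [dist_eq_norm, dist_eq_norm, sgF_sub, norm_smul]
  simp
  ring

lemma sgF_inj (i : Fin 3) : Function.Injective (sgF i) := by
  intro x y h
  have := sgF_sub i x y
  rw [h, sub_self] at this
  have h2 : x - y = 0 := by
    have := congrArg (fun z => (2:ℝ) • z) this
    simpa using this.symm
  linear_combination (norm := module) h2

lemma sgF_cont (i : Fin 3) : Continuous (sgF i) := by
  unfold sgF
  fun_prop

lemma sgFw_nil : sgFw [] = id := rfl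

lemma sgFw_cons (i : Fin 3) (w : List (Fin 3)) : sgFw (i :: w) = sgF i ∘ sgFw w := rfl

lemma sgFw_append (u v : List (Fin 3)) : sgFw (u ++ v) = sgFw u ∘ sgFw v := by
  induction u with
  | nil => rfl
  | cons i u ih => rw [List.cons_append, sgFw_cons, sgFw_cons, ih]; rfl

lemma sgFw_cont (w : List (Fin 3)) : Continuous (sgFw w) := by
  induction w with
  | nil => exact continuous_id
  | cons i w ih => rw [sgFw_cons]; exact (sgF_cont i).comp ih

lemma sgFw_inj (w : List (Fin 3)) : Function.Injective (sgFw w) := by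
  induction w with
  | nil => exact fun x y h => h
  | cons i w ih => rw [sgFw_cons]; exact (sgF_inj i).comp ih

lemma sgFw_dist (w : List (Fin 3)) (x y : ℝ × ℝ) :
    dist (sgFw w x) (sgFw w y) = (1/2:ℝ) ^ w.length * dist x y := by
  induction w with
  | nil => simp [sgFw_nil]
  | cons i w ih =>
    rw [sgFw_cons, Function.comp_apply, Function.comp_apply, sgF_dist, ih,
      List.length_cons, pow_succ]
    ring

end SGaux

namespace SGaux

section Kfacts

variable {K : Set (ℝ × ℝ)} (hKne : K.Nonempty) (hKcpt : IsCompact K)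
  (hKfix : K = ⋃ i : Fin 3, sgF i '' K)

include hKfix in
lemma sgF_mem_K {i : Fin 3} {x : ℝ × ℝ} (hx : x ∈ K) : sgF i x ∈ K := by
  rw [hKfix]
  exact Set.mem_iUnion.mpr ⟨i, ⟨x, hx, rfl⟩⟩

include hKfix in
lemma sgFw_mem_K {w : List (Fin 3)} {x : ℝ × ℝ} (hx : x ∈ K) : sgFw w x ∈ K := by
  induction w with
  | nil => exact hx
  | cons i w ih => rw [sgFw_cons]; exact sgF_mem_K hKfix ih

include hKfix in
/-- Any point of `K` is the image of a point of `K` under some `sgF i`. -/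
lemma K_step {x : ℝ × ℝ} (hx : x ∈ K) : ∃ i : Fin 3, ∃ z ∈ K, x = sgF i z := by
  rw [hKfix] at hx
  obtain ⟨i, hi⟩ := Set.mem_iUnion.mp hx
  obtain ⟨z, hz, hze⟩ := hi
  exact ⟨i, z, hz, hze.symm⟩

include hKne hKcpt hKfix in
/-- A bounded set which refines into its `sgF`-images is contained in `K`. -/
lemma subset_K {S : Set (ℝ × ℝ)} (hSb : Bornology.IsBounded S)
    (hsub : ∀ x ∈ S, ∃ i : Fin 3, ∃ z ∈ S, x = sgF i z) : S ⊆ K := by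
  obtain ⟨k₀, hk₀⟩ := hKne
  obtain ⟨C, hC⟩ : ∃ C : ℝ, ∀ x ∈ S, dist x k₀ ≤ C := by
    obtain ⟨r, hr⟩ := hSb.subset_closedBall k₀
    exact ⟨r, fun x hx => hr hx⟩
  have key : ∀ n : ℕ, ∀ x ∈ S, ∃ y ∈ K, dist x y ≤ (1/2:ℝ)^n * C := by
    intro n
    induction n with
    | zero => intro x hx; exact ⟨k₀, hk₀, by simpa using hC x hx⟩
    | succ n ih =>
      intro x hx
      obtain ⟨i, z, hz, hze⟩ := hsub x hx
      obtain ⟨y, hy, hdy⟩ := ih z hz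
      refine ⟨sgF i y, sgF_mem_K hKfix hy, ?_⟩
      rw [hze, sgF_dist]
      rw [pow_succ]
      linarith
  intro x hx
  have hclosed : IsClosed K := hKcpt.isClosed
  rw [← hclosed.closure_eq]
  rw [Metric.mem_closure_iff]
  intro ε hε
  have hC0 : 0 ≤ C := le_trans dist_nonneg (hC x hx)
  obtain ⟨n, hn⟩ : ∃ n : ℕ, (1/2:ℝ)^n * C < ε := by
    rcases eq_or_lt_of_le hC0 with h | h
    · exact ⟨0, by rw [← h]; simpa using hε⟩
    · obtain ⟨n, hn⟩ := exists_pow_lt_of_lt_one (div_pos hε h) (by norm_num : (1/2:ℝ) < 1)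
      exact ⟨n, by rw [← lt_div_iff₀ h]; exact hn⟩
  obtain ⟨y, hy, hdy⟩ := key n x hx
  exact ⟨y, hy, lt_of_le_of_lt hdy hn⟩

include hKne hKcpt hKfix in
/-- `K` is contained in any nonempty closed set invariant under the `sgF i`. -/
lemma K_subset {S : Set (ℝ × ℝ)} (hScl : IsClosed S) (hSne : S.Nonempty)
    (hinv : ∀ i : Fin 3, ∀ z ∈ S, sgF i z ∈ S) : K ⊆ S := by
  obtain ⟨s₀, hs₀⟩ := hSne
  obtain ⟨C, hC⟩ : ∃ C : ℝ, ∀ x ∈ K, dist x s₀ ≤ C := by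
    obtain ⟨r, hr⟩ := hKcpt.isBounded.subset_closedBall s₀
    exact ⟨r, fun x hx => hr hx⟩
  have key : ∀ n : ℕ, ∀ x ∈ K, ∃ y ∈ S, dist x y ≤ (1/2:ℝ)^n * C := by
    intro n
    induction n with
    | zero => intro x hx; exact ⟨s₀, hs₀, by simpa using hC x hx⟩
    | succ n ih =>
      intro x hx
      obtain ⟨i, z, hz, hze⟩ := K_step hKfix hx
      obtain ⟨y, hy, hdy⟩ := ih z hz
      refine ⟨sgF i y, hinv i y hy, ?_⟩
      rw [hze, sgF_dist, pow_succ]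
      linarith
  intro x hx
  rw [← hScl.closure_eq, Metric.mem_closure_iff]
  intro ε hε
  have hC0 : 0 ≤ C := le_trans dist_nonneg (hC x hx)
  obtain ⟨n, hn⟩ : ∃ n : ℕ, (1/2:ℝ)^n * C < ε := by
    rcases eq_or_lt_of_le hC0 with h | h
    · exact ⟨0, by rw [← h]; simpa using hε⟩
    · obtain ⟨n, hn⟩ := exists_pow_lt_of_lt_one (div_pos hε h) (by norm_num : (1/2:ℝ) < 1)
      exact ⟨n, by rw [← lt_div_iff₀ h]; exact hn⟩
  obtain ⟨y, hy, hdy⟩ := key n x hx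
  exact ⟨y, hy, lt_of_le_of_lt hdy hn⟩

include hKne hKcpt hKfix in
lemma sgvtx_mem_K (i : Fin 3) : sgvtx i ∈ K := by
  have hfix : sgF i (sgvtx i) = sgvtx i := by
    simp only [sgF]
    module
  have : ({sgvtx i} : Set (ℝ × ℝ)) ⊆ K := by
    apply subset_K hKne hKcpt hKfix
    · exact Bornology.isBounded_singleton
    · intro x hx
      rw [Set.mem_singleton_iff] at hx
      exact ⟨i, sgvtx i, rfl, by rw [hx, hfix]⟩
  exact this rfl

include hKne hKcpt hKfix in
lemma segment_subset_K (i j : Fin 3) :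
    (segment ℝ (sgvtx i) (sgvtx j) : Set (ℝ × ℝ)) ⊆ K := by
  apply subset_K hKne hKcpt hKfix
  · rw [segment_eq_image']
    exact (isCompact_Icc.image_of_continuousOn (by fun_prop)).isBounded
  · intro x hx
    rw [segment_eq_image'] at hx
    obtain ⟨t, ht, hte⟩ := hx
    rcases le_total t (1/2 : ℝ) with hc | hc
    · refine ⟨i, sgvtx i + (2*t) • (sgvtx j - sgvtx i), ?_, ?_⟩
      · rw [segment_eq_image']
        exact ⟨2*t, ⟨by linarith [ht.1], by linarith⟩, rfl⟩
      · rw [← hte]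
        simp only [sgF, smul_add, smul_sub]
        module
    · refine ⟨j, sgvtx i + (2*t - 1) • (sgvtx j - sgvtx i), ?_, ?_⟩
      · rw [segment_eq_image']
        exact ⟨2*t - 1, ⟨by linarith, by linarith [ht.2]⟩, rfl⟩
      · rw [← hte]
        simp only [sgF, smul_add, smul_sub]
        have : sgvtx j = sgvtx i + (1:ℝ) • (sgvtx j - sgvtx i) := by module
        rw [this]
        module

end Kfacts

end SGaux

namespace SGaux

/-- The solid closed triangle. -/
def sgT : Set (ℝ × ℝ) :=
  {p | 0 ≤ p.2 ∧ p.2 ≤ Real.sqrt 3 * p.1 ∧ p.2 ≤ Real.sqrt 3 * (1 - p.1)}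

lemma sq3_pos : (0:ℝ) < Real.sqrt 3 := Real.sqrt_pos.mpr (by norm_num)

lemma sgT_closed : IsClosed sgT := by
  apply IsClosed.inter
  · exact isClosed_le continuous_const continuous_snd
  · apply IsClosed.inter
    · exact isClosed_le continuous_snd (continuous_const.mul continuous_fst)
    · exact isClosed_le continuous_snd (continuous_const.mul (continuous_const.sub continuous_fst))

lemma sgF_coords (i : Fin 3) (p : ℝ × ℝ) :
    sgF i p = ((p.1 + (sgvtx i).1)/2, (p.2 + (sgvtx i).2)/2) := by
  simp only [sgF, Prod.smul_def, smul_eq_mul]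
  have h : p + sgvtx i = (p.1 + (sgvtx i).1, p.2 + (sgvtx i).2) := rfl
  rw [h]
  simp only [Prod.smul_def, smul_eq_mul, Prod.mk.injEq]
  constructor <;> ring

lemma sgT_inv (i : Fin 3) {p : ℝ × ℝ} (hp : p ∈ sgT) : sgF i p ∈ sgT := by
  have h3 := sq3_pos
  obtain ⟨h1, h2, h4⟩ := hp
  rw [sgF_coords]
  fin_cases i <;>
    simp only [sgvtx, sgv1, sgv2, sgv3, sgT, Set.mem_setOf_eq] <;>
    refine ⟨by linarith, ?_, ?_⟩ <;> nlinarith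

lemma x_nonneg {z : ℝ × ℝ} (hz : z ∈ sgT) : 0 ≤ z.1 := by
  obtain ⟨h1, h2, _⟩ := hz; nlinarith [sq3_pos]

lemma x_le_one {z : ℝ × ℝ} (hz : z ∈ sgT) : z.1 ≤ 1 := by
  obtain ⟨h1, _, h3⟩ := hz; nlinarith [sq3_pos]

lemma sep01 {z z' : ℝ × ℝ} (hz : z ∈ sgT) (hz' : z' ∈ sgT)
    (d1 : z.1 = z'.1 + 1/2) (d2 : z.2 = z'.2 + Real.sqrt 3 / 2) :
    z = sgv2 ∧ z' = sgv1 := by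
  set s := Real.sqrt 3 with hs
  obtain ⟨h1, h2, h3⟩ := hz
  obtain ⟨h1', h2', h3'⟩ := hz'
  have m1 : s * z.1 = s * z'.1 + s / 2 := by rw [d1]; ring
  have key : z'.2 + s * z'.1 ≤ 0 := by
    have h3x : z.2 ≤ s * (1 - z.1) := h3
    nlinarith [h3x]
  have e1 : z'.2 = 0 := by linarith
  have e2 : s * z'.1 = 0 := by linarith
  have e3 : z'.1 = 0 := by
    rcases mul_eq_zero.mp e2 with h | h
    · exact absurd h sq3_pos.ne'
    · exact h
  constructor
  · have : z.1 = 1/2 := by linarith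
    have h2c : z.2 = s / 2 := by linarith
    exact Prod.ext this h2c
  · exact Prod.ext e3 e1

lemma sep02 {z z' : ℝ × ℝ} (hz : z ∈ sgT) (hz' : z' ∈ sgT)
    (d1 : z.1 = z'.1 + 1) (d2 : z.2 = z'.2) :
    z = sgv3 ∧ z' = sgv1 := by
  set s := Real.sqrt 3 with hs
  have hx := x_nonneg hz'
  have hx1 := x_le_one hz
  obtain ⟨h1, h2, h3⟩ := hz
  obtain ⟨h1', h2', h3'⟩ := hz'
  have e1 : z.1 = 1 := by linarith
  have e1' : z'.1 = 0 := by linarith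
  have m : s * z.1 = s := by rw [e1]; ring
  have e2 : z.2 = 0 := by nlinarith
  have e2' : z'.2 = 0 := by linarith
  exact ⟨Prod.ext e1 e2, Prod.ext e1' e2'⟩

lemma sep12 {z z' : ℝ × ℝ} (hz : z ∈ sgT) (hz' : z' ∈ sgT)
    (d1 : z.1 = z'.1 + 1/2) (d2 : z.2 = z'.2 - Real.sqrt 3 / 2) :
    z = sgv3 ∧ z' = sgv2 := by
  set s := Real.sqrt 3 with hs
  have hx1 := x_le_one hz
  obtain ⟨h1, h2, h3⟩ := hz
  obtain ⟨h1', h2', h3'⟩ := hz'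
  have m1 : s * z'.1 = s * z.1 - s / 2 := by rw [d1]; ring
  have key : s * z.1 ≥ s := by nlinarith
  have e1 : z.1 = 1 := le_antisymm hx1 (by nlinarith [sq3_pos])
  have m : s * z.1 = s := by rw [e1]; ring
  have e2 : z.2 = 0 := by nlinarith
  have e1' : z'.1 = 1/2 := by linarith
  have e2' : z'.2 = s / 2 := by linarith
  exact ⟨Prod.ext e1 e2, Prod.ext e1' e2'⟩

/-- Pinning: if two cells of the triangle meet, the meeting point is forced. -/
lemma cell_sep {i j : Fin 3} (hij : i ≠ j) {z z' : ℝ × ℝ}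
    (hz : z ∈ sgT) (hz' : z' ∈ sgT) (h : sgF i z = sgF j z') :
    z = sgvtx j ∧ z' = sgvtx i := by
  have hdiff : z - z' = sgvtx j - sgvtx i := by
    simp only [sgF] at h
    linear_combination (norm := module) (2:ℝ) • h
  have hd1 : z.1 - z'.1 = (sgvtx j).1 - (sgvtx i).1 := congrArg Prod.fst hdiff
  have hd2 : z.2 - z'.2 = (sgvtx j).2 - (sgvtx i).2 := congrArg Prod.snd hdiff
  fin_cases i <;> fin_cases j
  · exact absurd rfl hij
  · -- i = 0, j = 1
    norm_num [sgvtx, sgv1, sgv2, sgv3] at hd1 hd2 ⊢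
    exact sep01 hz hz' (by linarith) (by linarith)
  · -- i = 0, j = 2
    norm_num [sgvtx, sgv1, sgv2, sgv3] at hd1 hd2 ⊢
    exact sep02 hz hz' (by linarith) (by linarith)
  · -- i = 1, j = 0
    norm_num [sgvtx, sgv1, sgv2, sgv3] at hd1 hd2 ⊢
    exact (sep01 hz' hz (by linarith) (by linarith)).symm
  · exact absurd rfl hij
  · -- i = 1, j = 2
    norm_num [sgvtx, sgv1, sgv2, sgv3] at hd1 hd2 ⊢
    exact sep12 hz hz' (by linarith) (by linarith)
  · -- i = 2, j = 0
    norm_num [sgvtx, sgv1, sgv2, sgv3] at hd1 hd2 ⊢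
    exact (sep02 hz' hz (by linarith) (by linarith)).symm
  · -- i = 2, j = 1
    norm_num [sgvtx, sgv1, sgv2, sgv3] at hd1 hd2 ⊢
    exact (sep12 hz' hz (by linarith) (by linarith)).symm
  · exact absurd rfl hij

section Kfacts

variable {K : Set (ℝ × ℝ)} (hKne : K.Nonempty) (hKcpt : IsCompact K)
  (hKfix : K = ⋃ i : Fin 3, sgF i '' K)

include hKne hKcpt hKfix in
lemma K_subset_T : K ⊆ sgT :=
  K_subset hKne hKcpt hKfix sgT_closed
    ⟨sgv1, by
      simp only [sgT, Set.mem_setOf_eq, sgv1]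
      refine ⟨le_refl _, by norm_num, by norm_num [sq3_pos.le]⟩⟩
    (fun i z hz => sgT_inv i hz)

include hKne hKcpt hKfix in
/-- Distinct level-one cells of `K` intersect in at most the edge midpoint. -/
lemma cell_inter {i j : Fin 3} (hij : i ≠ j) {x : ℝ × ℝ}
    (hxi : x ∈ sgF i '' K) (hxj : x ∈ sgF j '' K) :
    x = sgF i (sgvtx j) := by
  obtain ⟨z, hz, hze⟩ := hxi
  obtain ⟨z', hz', hze'⟩ := hxj
  have h : sgF i z = sgF j z' := by rw [hze, hze']
  obtain ⟨e1, _⟩ := cell_sep hij (K_subset_T hKne hKcpt hKfix hz)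
    (K_subset_T hKne hKcpt hKfix hz') h
  rw [← hze, e1]

end Kfacts

end SGaux

namespace SGaux

lemma sgc0_cont : Continuous sgc0 := by
  unfold sgc0
  have hB : Continuous fun t : ℝ =>
      if t ≤ 2/3 then sgv2 + (3 * t - 1) • (sgv3 - sgv2) else sgv3 + (3 * t - 2) • (sgv1 - sgv3) := by
    apply Continuous.if_le
    · fun_prop
    · fun_prop
    · exact continuous_id
    · exact continuous_const
    · intro t ht
      rw [ht]
      norm_num
  apply Continuous.if_le
  · fun_prop
  · exact hB
  · exact continuous_id
  · exact continuous_const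
  · intro t ht
    rw [ht]
    norm_num

lemma mid_comm (i j : Fin 3) : sgF i (sgvtx j) = sgF j (sgvtx i) := by
  simp only [sgF]
  module

lemma sgc0_zero : sgc0 0 = sgvtx 0 := by
  unfold sgc0
  norm_num
  rfl

lemma sgc0_one : sgc0 1 = sgvtx 0 := by
  unfold sgc0
  norm_num
  rfl

/-- Piece 1 : `t ∈ [0,1/6]`. -/
lemma sgc0_p1 {t : ℝ} (h0 : 0 ≤ t) (h1 : t ≤ 1/6) :
    sgc0 t = sgF 0 (sgvtx 0 + (6*t) • (sgvtx 1 - sgvtx 0)) := by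
  unfold sgc0
  rw [if_pos (by linarith : t ≤ 1/3)]
  simp only [sgF, sgvtx]
  module

/-- Piece 2 : `t ∈ [1/6,1/3]`. -/
lemma sgc0_p2 {t : ℝ} (h0 : 1/6 ≤ t) (h1 : t ≤ 1/3) :
    sgc0 t = sgF 1 (sgvtx 0 + (6*t - 1) • (sgvtx 1 - sgvtx 0)) := by
  unfold sgc0
  rw [if_pos (by linarith : t ≤ 1/3)]
  simp only [sgF, sgvtx]
  module

/-- Piece 3 : `t ∈ [1/3,1/2]`. -/
lemma sgc0_p3 {t : ℝ} (h0 : 1/3 ≤ t) (h1 : t ≤ 1/2) :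
    sgc0 t = sgF 1 (sgvtx 1 + (6*t - 2) • (sgvtx 2 - sgvtx 1)) := by
  unfold sgc0
  rcases eq_or_lt_of_le h0 with he | hlt
  · rw [if_pos (by linarith : t ≤ 1/3)]
    rw [← he]
    simp only [sgF, sgvtx]
    module
  · rw [if_neg (by linarith : ¬ t ≤ 1/3), if_pos (by linarith : t ≤ 2/3)]
    simp only [sgF, sgvtx]
    module

/-- Piece 4 : `t ∈ [1/2,2/3]`. -/
lemma sgc0_p4 {t : ℝ} (h0 : 1/2 ≤ t) (h1 : t ≤ 2/3) :
    sgc0 t = sgF 2 (sgvtx 1 + (6*t - 3) • (sgvtx 2 - sgvtx 1)) := by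
  unfold sgc0
  rw [if_neg (by linarith : ¬ t ≤ 1/3), if_pos (by linarith : t ≤ 2/3)]
  simp only [sgF, sgvtx]
  module

/-- Piece 5 : `t ∈ [2/3,5/6]`. -/
lemma sgc0_p5 {t : ℝ} (h0 : 2/3 ≤ t) (h1 : t ≤ 5/6) :
    sgc0 t = sgF 2 (sgvtx 2 + (6*t - 4) • (sgvtx 0 - sgvtx 2)) := by
  unfold sgc0
  rcases eq_or_lt_of_le h0 with he | hlt
  · rw [if_neg (by linarith : ¬ t ≤ 1/3), if_pos (by linarith : t ≤ 2/3)]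
    rw [← he]
    simp only [sgF, sgvtx]
    module
  · rw [if_neg (by linarith : ¬ t ≤ 1/3), if_neg (by linarith : ¬ t ≤ 2/3)]
    simp only [sgF, sgvtx]
    module

/-- Piece 6 : `t ∈ [5/6,1]`. -/
lemma sgc0_p6 {t : ℝ} (h0 : 5/6 ≤ t) (h1 : t ≤ 1) :
    sgc0 t = sgF 0 (sgvtx 2 + (6*t - 5) • (sgvtx 0 - sgvtx 2)) := by
  unfold sgc0
  rw [if_neg (by linarith : ¬ t ≤ 1/3), if_neg (by linarith : ¬ t ≤ 2/3)]
  simp only [sgF, sgvtx]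
  module

lemma sgc0_sixth : sgc0 (1/6) = sgF 0 (sgvtx 1) := by
  rw [sgc0_p1 (by norm_num) (by norm_num)]
  simp only [sgF]
  module

lemma sgc0_half : sgc0 (1/2) = sgF 1 (sgvtx 2) := by
  rw [sgc0_p3 (by norm_num) (by norm_num)]
  simp only [sgF]
  module

lemma sgc0_fivesixth : sgc0 (5/6) = sgF 2 (sgvtx 0) := by
  rw [sgc0_p5 (by norm_num) (by norm_num)]
  simp only [sgF]
  module

section Kfacts

variable {K : Set (ℝ × ℝ)} (hKne : K.Nonempty) (hKcpt : IsCompact K)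
  (hKfix : K = ⋃ i : Fin 3, sgF i '' K)

include hKne hKcpt hKfix in
lemma seg_pt_mem {i j : Fin 3} {r : ℝ} (h0 : 0 ≤ r) (h1 : r ≤ 1) :
    sgvtx i + r • (sgvtx j - sgvtx i) ∈ K := by
  apply segment_subset_K hKne hKcpt hKfix i j
  rw [segment_eq_image']
  exact ⟨r, ⟨h0, h1⟩, rfl⟩

include hKne hKcpt hKfix in
lemma sgc0_mem_K {t : ℝ} (ht : t ∈ Icc (0:ℝ) 1) : sgc0 t ∈ K := by
  obtain ⟨h0, h1⟩ := ht
  rcases le_total t (1/6 : ℝ) with h | h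
  · rw [sgc0_p1 h0 h]
    exact sgF_mem_K hKfix (seg_pt_mem hKne hKcpt hKfix (by linarith) (by linarith))
  rcases le_total t (1/3 : ℝ) with h2 | h2
  · rw [sgc0_p2 h h2]
    exact sgF_mem_K hKfix (seg_pt_mem hKne hKcpt hKfix (by linarith) (by linarith))
  rcases le_total t (1/2 : ℝ) with h3 | h3
  · rw [sgc0_p3 h2 h3]
    exact sgF_mem_K hKfix (seg_pt_mem hKne hKcpt hKfix (by linarith) (by linarith))
  rcases le_total t (2/3 : ℝ) with h4 | h4
  · rw [sgc0_p4 h3 h4]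
    exact sgF_mem_K hKfix (seg_pt_mem hKne hKcpt hKfix (by linarith) (by linarith))
  rcases le_total t (5/6 : ℝ) with h5 | h5
  · rw [sgc0_p5 h4 h5]
    exact sgF_mem_K hKfix (seg_pt_mem hKne hKcpt hKfix (by linarith) (by linarith))
  · rw [sgc0_p6 h5 h1]
    exact sgF_mem_K hKfix (seg_pt_mem hKne hKcpt hKfix (by linarith) (by linarith))

end Kfacts

end SGaux

namespace SGaux

lemma icc_inter' (a b c : ℝ) (hab : a ≤ b) (hbc : b ≤ c) :
    Icc a b ∩ Icc b c = {b} := by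
  ext x
  simp only [Set.mem_inter_iff, Set.mem_Icc, Set.mem_singleton_iff]
  constructor
  · rintro ⟨⟨_, h1⟩, h2, _⟩; linarith
  · rintro rfl; exact ⟨⟨hab, le_refl _⟩, le_refl _, hbc⟩

lemma sgFw_single (i : Fin 3) : sgFw [i] = sgF i := rfl

lemma sgFw_snoc (u : List (Fin 3)) (i : Fin 3) (x : ℝ × ℝ) :
    sgFw (u ++ [i]) x = sgFw u (sgF i x) := by
  rw [sgFw_append]; rfl

section Kfacts

variable {K : Set (ℝ × ℝ)} (hKne : K.Nonempty) (hKcpt : IsCompact K)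
  (hKfix : K = ⋃ i : Fin 3, sgF i '' K)

include hKfix in
lemma cell_subset_K (u : List (Fin 3)) : sgFw u '' K ⊆ K := by
  rintro x ⟨z, hz, rfl⟩
  exact sgFw_mem_K hKfix hz

include hKcpt in
lemma cell_closed (u : List (Fin 3)) : IsClosed (sgFw u '' K) :=
  (hKcpt.image (sgFw_cont u)).isClosed

include hKfix in
lemma cell_decomp (u : List (Fin 3)) :
    sgFw u '' K = (sgFw (u ++ [0]) '' K ∪ sgFw (u ++ [1]) '' K) ∪ sgFw (u ++ [2]) '' K := by
  have h1 : ∀ i : Fin 3, sgFw (u ++ [i]) '' K = sgFw u '' (sgF i '' K) := by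
    intro i
    rw [sgFw_append, sgFw_single, Set.image_comp]
  rw [h1 0, h1 1, h1 2]
  have h2 : (⋃ i : Fin 3, sgF i '' K) = (sgF 0 '' K ∪ sgF 1 '' K) ∪ sgF 2 '' K := by
    ext x
    constructor
    · intro hx
      rw [Set.mem_iUnion] at hx
      obtain ⟨i, hi⟩ := hx
      fin_cases i
      · exact Or.inl (Or.inl hi)
      · exact Or.inl (Or.inr hi)
      · exact Or.inr hi
    · rintro ((hx | hx) | hx)
      · exact Set.mem_iUnion.mpr ⟨0, hx⟩
      · exact Set.mem_iUnion.mpr ⟨1, hx⟩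
      · exact Set.mem_iUnion.mpr ⟨2, hx⟩
  conv_lhs => rw [hKfix, h2]
  rw [Set.image_union, Set.image_union]

include hKne hKcpt hKfix in
lemma cell_junction {u : List (Fin 3)} {i j : Fin 3} (hij : i ≠ j) {x : ℝ × ℝ}
    (hxi : x ∈ sgFw (u ++ [i]) '' K) (hxj : x ∈ sgFw (u ++ [j]) '' K) :
    x = sgFw u (sgF i (sgvtx j)) := by
  obtain ⟨z, hz, hze⟩ := hxi
  obtain ⟨z', hz', hze'⟩ := hxj
  rw [sgFw_snoc] at hze hze'
  have h : sgF i z = sgF j z' := sgFw_inj u (hze.trans hze'.symm)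
  obtain ⟨e1, _⟩ := cell_sep hij (K_subset_T hKne hKcpt hKfix hz)
    (K_subset_T hKne hKcpt hKfix hz') h
  rw [← hze, e1]

include hKne hKcpt hKfix in
lemma junction_mem (u : List (Fin 3)) (i j : Fin 3) :
    sgFw u (sgF i (sgvtx j)) ∈ sgFw (u ++ [i]) '' K :=
  ⟨sgvtx j, sgvtx_mem_K hKne hKcpt hKfix j, sgFw_snoc u i _⟩

include hKne hKcpt hKfix in
/-- **Main lifting lemma**: a continuous map `K → 𝕋` all of whose cell windings
vanish lifts to a continuous real-valued map. -/
lemma main_lift {h : ℝ × ℝ → 𝕋c} (hcont : ContinuousOn h K)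
    (hw : ∀ u : List (Fin 3), HasWinding (fun t => h (sgcw u t)) 0) :
    ∃ H : ℝ × ℝ → ℝ, ContinuousOn H K ∧ ∀ x ∈ K, ((H x : ℝ) : 𝕋c) = h x := by
  classical
  -- uniform continuity
  obtain ⟨δ, hδ, hκ⟩ : ∃ δ > 0, ∀ x ∈ K, ∀ y ∈ K, dist x y < δ → ‖h x - h y‖ < 2⁻¹ := by
    have := hKcpt.uniformContinuousOn_of_continuous hcont
    rw [Metric.uniformContinuousOn_iff] at this
    obtain ⟨δ, h1, h2⟩ := this 2⁻¹ (by norm_num)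
    exact ⟨δ, h1, fun x hx y hy hxy => by
      have := h2 x hx y hy hxy; rwa [dist_eq_norm] at this⟩
  -- a diameter bound
  obtain ⟨k₀, hk₀⟩ := id hKne
  obtain ⟨C, hC0, hC⟩ : ∃ C : ℝ, 0 ≤ C ∧ ∀ x ∈ K, ∀ y ∈ K, dist x y ≤ C := by
    obtain ⟨r, hr⟩ := hKcpt.isBounded.subset_closedBall k₀
    refine ⟨2 * max r 0, by positivity, fun x hx y hy => ?_⟩
    have h1 : dist x k₀ ≤ max r 0 := le_trans (hr hx) (le_max_left _ _)
    have h2 : dist y k₀ ≤ max r 0 := le_trans (hr hy) (le_max_left _ _)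
    calc dist x y ≤ dist x k₀ + dist k₀ y := dist_triangle _ _ _
      _ ≤ 2 * max r 0 := by rw [dist_comm k₀ y]; linarith
  obtain ⟨n, hn⟩ : ∃ n : ℕ, (1/2:ℝ)^n * C < δ := by
    rcases eq_or_lt_of_le hC0 with hc | hc
    · exact ⟨0, by rw [← hc]; simpa using hδ⟩
    · obtain ⟨m, hm⟩ := exists_pow_lt_of_lt_one (div_pos hδ hc) (by norm_num : (1/2:ℝ) < 1)
      exact ⟨m, by rw [← lt_div_iff₀ hc]; exact hm⟩
  -- base case : small cells lift
  have base : ∀ u : List (Fin 3), n ≤ u.length →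
      ∃ L : ℝ × ℝ → ℝ, ContinuousOn L (sgFw u '' K) ∧
        ∀ x ∈ sgFw u '' K, ((L x : ℝ) : 𝕋c) = h x := by
    intro u hu
    set x₀ : ℝ × ℝ := sgFw u k₀ with hx₀
    have hx₀K : x₀ ∈ K := sgFw_mem_K hKfix hk₀
    have hsmall : ∀ x ∈ sgFw u '' K, ‖h x - ((trep (h x₀) : ℝ) : 𝕋c)‖ < 2⁻¹ := by
      rintro x ⟨z, hz, rfl⟩
      rw [trep_coe]
      apply hκ _ (sgFw_mem_K hKfix hz) _ hx₀K
      have hd : dist (sgFw u z) x₀ = (1/2:ℝ)^u.length * dist z k₀ := sgFw_dist u z k₀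
      rw [hd]
      have hmono : (1/2:ℝ)^u.length ≤ (1/2:ℝ)^n :=
        pow_le_pow_of_le_one (by norm_num) (by norm_num) hu
      calc (1/2:ℝ)^u.length * dist z k₀ ≤ (1/2:ℝ)^n * C := by
            apply mul_le_mul hmono (hC z hz k₀ hk₀) dist_nonneg (by positivity)
        _ < δ := hn
    obtain ⟨L, h1, h2, -⟩ := lift_small (u := h) (S := sgFw u '' K)
      (hcont.mono (cell_subset_K hKfix u)) (trep (h x₀)) hsmall
    exact ⟨L, h1, h2⟩
  -- gluing step
  have step : ∀ u : List (Fin 3),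
      (∀ i : Fin 3, ∃ L : ℝ × ℝ → ℝ, ContinuousOn L (sgFw (u ++ [i]) '' K) ∧
        ∀ x ∈ sgFw (u ++ [i]) '' K, ((L x : ℝ) : 𝕋c) = h x) →
      ∃ L : ℝ × ℝ → ℝ, ContinuousOn L (sgFw u '' K) ∧
        ∀ x ∈ sgFw u '' K, ((L x : ℝ) : 𝕋c) = h x := by
    intro u hchild
    obtain ⟨l0, hl0c, hl0e⟩ := hchild 0
    obtain ⟨l1, hl1c, hl1e⟩ := hchild 1
    obtain ⟨l2, hl2c, hl2e⟩ := hchild 2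
    set p01 : ℝ × ℝ := sgFw u (sgF 0 (sgvtx 1)) with hp01
    set p12 : ℝ × ℝ := sgFw u (sgF 1 (sgvtx 2)) with hp12
    set p02 : ℝ × ℝ := sgFw u (sgF 2 (sgvtx 0)) with hp02
    have hp02' : p02 = sgFw u (sgF 0 (sgvtx 2)) := by rw [hp02, mid_comm 2 0]
    have hmem010 : p01 ∈ sgFw (u ++ [0]) '' K := junction_mem hKne hKcpt hKfix u 0 1
    have hmem011 : p01 ∈ sgFw (u ++ [1]) '' K := by
      rw [hp01, mid_comm 0 1]; exact junction_mem hKne hKcpt hKfix u 1 0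
    have hmem121 : p12 ∈ sgFw (u ++ [1]) '' K := junction_mem hKne hKcpt hKfix u 1 2
    have hmem122 : p12 ∈ sgFw (u ++ [2]) '' K := by
      rw [hp12, mid_comm 1 2]; exact junction_mem hKne hKcpt hKfix u 2 1
    have hmem022 : p02 ∈ sgFw (u ++ [2]) '' K := junction_mem hKne hKcpt hKfix u 2 0
    have hmem020 : p02 ∈ sgFw (u ++ [0]) '' K := by
      rw [hp02']; exact junction_mem hKne hKcpt hKfix u 0 2
    set a : ℝ := l0 p01 - l1 p01 with ha
    set b : ℝ := l1 p12 - l2 p12 with hb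
    set cc : ℝ := l2 p02 - l0 p02 with hcc
    have hcoe_a : ((a : ℝ) : 𝕋c) = 0 := by
      rw [ha, coe_sub_T, hl0e p01 hmem010, hl1e p01 hmem011, sub_self]
    have hcoe_b : ((b : ℝ) : 𝕋c) = 0 := by
      rw [hb, coe_sub_T, hl1e p12 hmem121, hl2e p12 hmem122, sub_self]
    have hcoe_ab : ((a + b : ℝ) : 𝕋c) = 0 := by
      rw [coe_add_T, hcoe_a, hcoe_b, add_zero]
    have hcoe_cc : ((cc : ℝ) : 𝕋c) = 0 := by
      rw [hcc, coe_sub_T, hl2e p02 hmem022, hl0e p02 hmem020, sub_self]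
    -- continuity of the parametrized boundary
    have hcw : Continuous (sgcw u) := by
      show Continuous fun t => sgFw u (sgc0 t)
      exact (sgFw_cont u).comp sgc0_cont
    -- memberships of the boundary pieces
    have hseg : ∀ (i p q : Fin 3) (r : ℝ), 0 ≤ r → r ≤ 1 →
        sgFw u (sgF i (sgvtx p + r • (sgvtx q - sgvtx p))) ∈ sgFw (u ++ [i]) '' K := by
      intro i p q r h0 h1
      exact ⟨_, seg_pt_mem hKne hKcpt hKfix h0 h1, sgFw_snoc u i _⟩
    have memA : ∀ t ∈ Icc (0:ℝ) (1/6), sgcw u t ∈ sgFw (u ++ [0]) '' K := by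
      intro t ht
      show sgFw u (sgc0 t) ∈ _
      rw [sgc0_p1 ht.1 ht.2]
      exact hseg 0 0 1 _ (by linarith [ht.1]) (by linarith [ht.2])
    have memB : ∀ t ∈ Icc ((1:ℝ)/6) (1/2), sgcw u t ∈ sgFw (u ++ [1]) '' K := by
      intro t ht
      show sgFw u (sgc0 t) ∈ _
      rcases le_total t (1/3 : ℝ) with hc | hc
      · rw [sgc0_p2 ht.1 hc]
        exact hseg 1 0 1 _ (by linarith [ht.1]) (by linarith)
      · rw [sgc0_p3 hc ht.2]
        exact hseg 1 1 2 _ (by linarith) (by linarith [ht.2])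
    have memC : ∀ t ∈ Icc ((1:ℝ)/2) (5/6), sgcw u t ∈ sgFw (u ++ [2]) '' K := by
      intro t ht
      show sgFw u (sgc0 t) ∈ _
      rcases le_total t (2/3 : ℝ) with hc | hc
      · rw [sgc0_p4 ht.1 hc]
        exact hseg 2 1 2 _ (by linarith [ht.1]) (by linarith)
      · rw [sgc0_p5 hc ht.2]
        exact hseg 2 2 0 _ (by linarith) (by linarith [ht.2])
    have memD : ∀ t ∈ Icc ((5:ℝ)/6) 1, sgcw u t ∈ sgFw (u ++ [0]) '' K := by
      intro t ht
      show sgFw u (sgc0 t) ∈ _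
      rw [sgc0_p6 ht.1 ht.2]
      exact hseg 0 2 0 _ (by linarith [ht.1]) (by linarith [ht.2])
    -- special values
    have hcw16 : sgcw u (1/6) = p01 := by
      show sgFw u (sgc0 (1/6)) = p01
      rw [sgc0_sixth, hp01]
    have hcw12 : sgcw u (1/2) = p12 := by
      show sgFw u (sgc0 (1/2)) = p12
      rw [sgc0_half, hp12]
    have hcw56 : sgcw u (5/6) = p02 := by
      show sgFw u (sgc0 (5/6)) = p02
      rw [sgc0_fivesixth, hp02]
    have hcw0 : sgcw u 0 = sgFw u (sgvtx 0) := by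
      show sgFw u (sgc0 0) = _; rw [sgc0_zero]
    have hcw1 : sgcw u 1 = sgFw u (sgvtx 0) := by
      show sgFw u (sgc0 1) = _; rw [sgc0_one]
    -- build a lift of the boundary loop piece by piece
    set loop : ℝ → 𝕋c := fun t => h (sgcw u t) with hloop
    have hloopA : ∀ t ∈ Icc (0:ℝ) (1/6), ((l0 (sgcw u t) : ℝ) : 𝕋c) = loop t :=
      fun t ht => hl0e _ (memA t ht)
    have hloopB : ∀ t ∈ Icc ((1:ℝ)/6) (1/2),
        ((l1 (sgcw u t) + a : ℝ) : 𝕋c) = loop t := by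
      intro t ht
      rw [coe_add_T, hcoe_a, add_zero]
      exact hl1e _ (memB t ht)
    have hloopC : ∀ t ∈ Icc ((1:ℝ)/2) (5/6),
        ((l2 (sgcw u t) + (a + b) : ℝ) : 𝕋c) = loop t := by
      intro t ht
      rw [coe_add_T, hcoe_ab, add_zero]
      exact hl2e _ (memC t ht)
    have hloopD : ∀ t ∈ Icc ((5:ℝ)/6) 1,
        ((l0 (sgcw u t) + (a + b + cc) : ℝ) : 𝕋c) = loop t := by
      intro t ht
      rw [coe_add_T, coe_add_T, hcoe_ab, hcoe_cc, add_zero, add_zero]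
      exact hl0e _ (memD t ht)
    have hcontA : ContinuousOn (fun t => l0 (sgcw u t)) (Icc (0:ℝ) (1/6)) :=
      hl0c.comp hcw.continuousOn memA
    have hcontB : ContinuousOn (fun t => l1 (sgcw u t) + a) (Icc ((1:ℝ)/6) (1/2)) :=
      (hl1c.comp hcw.continuousOn memB).add continuousOn_const
    have hcontC : ContinuousOn (fun t => l2 (sgcw u t) + (a + b)) (Icc ((1:ℝ)/2) (5/6)) :=
      (hl2c.comp hcw.continuousOn memC).add continuousOn_const
    have hcontD : ContinuousOn (fun t => l0 (sgcw u t) + (a + b + cc)) (Icc ((5:ℝ)/6) 1) :=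
      (hl0c.comp hcw.continuousOn memD).add continuousOn_const
    obtain ⟨L1, hL1c, hL1e, hL1A, hL1B⟩ := glue_lifts (u := loop) isClosed_Icc isClosed_Icc
      hcontA hcontB hloopA hloopB (by
        intro x hx
        rw [icc_inter' 0 (1/6) (1/2) (by norm_num) (by norm_num)] at hx
        rw [Set.mem_singleton_iff] at hx
        subst hx
        rw [hcw16, ha]; ring)
    rw [Set.Icc_union_Icc_eq_Icc (by norm_num : (0:ℝ) ≤ 1/6) (by norm_num : (1:ℝ)/6 ≤ 1/2)]
      at hL1c hL1e
    obtain ⟨L2, hL2c, hL2e, hL2A, hL2B⟩ := glue_lifts (u := loop) isClosed_Icc isClosed_Icc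
      hL1c hcontC hL1e hloopC (by
        intro x hx
        rw [icc_inter' 0 (1/2) (5/6) (by norm_num) (by norm_num)] at hx
        rw [Set.mem_singleton_iff] at hx
        subst hx
        rw [hL1B (1/2) ⟨by norm_num, by norm_num⟩, hcw12, hb]; ring)
    rw [Set.Icc_union_Icc_eq_Icc (by norm_num : (0:ℝ) ≤ 1/2) (by norm_num : (1:ℝ)/2 ≤ 5/6)]
      at hL2c hL2e
    obtain ⟨L3, hL3c, hL3e, hL3A, hL3B⟩ := glue_lifts (u := loop) isClosed_Icc isClosed_Icc
      hL2c hcontD hL2e hloopD (by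
        intro x hx
        rw [icc_inter' 0 (5/6) 1 (by norm_num) (by norm_num)] at hx
        rw [Set.mem_singleton_iff] at hx
        subst hx
        rw [hL2B (5/6) ⟨by norm_num, by norm_num⟩, hcw56, hcc]; ring)
    rw [Set.Icc_union_Icc_eq_Icc (by norm_num : (0:ℝ) ≤ 5/6) (by norm_num : (5:ℝ)/6 ≤ 1)]
      at hL3c hL3e
    -- compute the increment of the glued lift
    have hL30 : L3 0 = l0 (sgcw u 0) := by
      rw [hL3A 0 ⟨le_refl _, by norm_num⟩, hL2A 0 ⟨le_refl _, by norm_num⟩,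
        hL1A 0 ⟨le_refl _, by norm_num⟩]
    have hL31 : L3 1 = l0 (sgcw u 1) + (a + b + cc) := by
      rw [hL3B 1 ⟨by norm_num, le_refl _⟩]
    have habc : a + b + cc = 0 := by
      obtain ⟨ch, hch1, hch2, hch3⟩ := hw u
      have := lift_increment_unique hL3c hL3e hch1 hch2
      rw [hch3, hL30, hL31, hcw0, hcw1] at this
      push_cast at this
      linarith
    -- glue the three cell lifts
    have hl1e' : ∀ x ∈ sgFw (u ++ [1]) '' K, ((l1 x + a : ℝ) : 𝕋c) = h x := by
      intro x hx; rw [coe_add_T, hcoe_a, add_zero]; exact hl1e x hx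
    have hl2e' : ∀ x ∈ sgFw (u ++ [2]) '' K, ((l2 x + (a+b) : ℝ) : 𝕋c) = h x := by
      intro x hx; rw [coe_add_T, hcoe_ab, add_zero]; exact hl2e x hx
    obtain ⟨M1, hM1c, hM1e, hM1A, hM1B⟩ := glue_lifts (u := h)
      (cell_closed hKcpt (u ++ [0])) (cell_closed hKcpt (u ++ [1]))
      hl0c (hl1c.add continuousOn_const) hl0e hl1e' (by
        intro x hx
        have hxe : x = p01 := cell_junction hKne hKcpt hKfix
          (by decide : (0 : Fin 3) ≠ 1) hx.1 hx.2
        subst hxe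
        simp only [Pi.add_apply, ha]; ring)
    obtain ⟨M2, hM2c, hM2e, hM2A, hM2B⟩ := glue_lifts (u := h)
      ((cell_closed hKcpt (u ++ [0])).union (cell_closed hKcpt (u ++ [1])))
      (cell_closed hKcpt (u ++ [2]))
      hM1c (hl2c.add continuousOn_const) hM1e hl2e' (by
        intro x hx
        rcases hx.1 with hx0 | hx1
        · have hxe : x = p02 := by
            rw [hp02']
            exact cell_junction hKne hKcpt hKfix (by decide : (0 : Fin 3) ≠ 2) hx0 hx.2
          subst hxe
          rw [hM1A p02 hx0]
          simp only [Pi.add_apply]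
          rw [hcc] at habc
          linarith
        · have hxe : x = p12 := by
            rw [hp12, mid_comm 1 2]
            exact cell_junction hKne hKcpt hKfix (by decide : (2 : Fin 3) ≠ 1) hx.2 hx1
          subst hxe
          rw [hM1B p12 hx1, hb]
          simp only [Pi.add_apply, ha]; ring)
    rw [← cell_decomp hKfix u] at hM2c hM2e
    exact ⟨M2, hM2c, hM2e⟩
  -- downward induction on depth
  have main : ∀ j : ℕ, ∀ u : List (Fin 3), n ≤ u.length + j →
      ∃ L : ℝ × ℝ → ℝ, ContinuousOn L (sgFw u '' K) ∧
        ∀ x ∈ sgFw u '' K, ((L x : ℝ) : 𝕋c) = h x := by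
    intro j
    induction j with
    | zero => intro u hu; exact base u (by simpa using hu)
    | succ j ih =>
      intro u hu
      rcases le_or_gt n (u.length + j) with hle | hlt
      · exact ih u hle
      · refine step u (fun i => ih (u ++ [i]) ?_)
        rw [List.length_append]
        simp only [List.length_singleton]
        omega
  obtain ⟨L, hLc, hLe⟩ := main n [] (by simp)
  rw [sgFw_nil, Set.image_id] at hLc hLe
  exact ⟨L, hLc, hLe⟩

end Kfacts

end SGaux

namespace SGaux

section Kfacts

variable {K : Set (ℝ × ℝ)} (hKne : K.Nonempty) (hKcpt : IsCompact K)
  (hKfix : K = ⋃ i : Fin 3, sgF i '' K)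

include hKne hKcpt hKfix in
lemma sgcw_mem_K {w : List (Fin 3)} {t : ℝ} (ht : t ∈ Icc (0:ℝ) 1) : sgcw w t ∈ K :=
  sgFw_mem_K hKfix (sgc0_mem_K hKne hKcpt hKfix ht)

lemma sgcw_loop (w : List (Fin 3)) : sgcw w 0 = sgcw w 1 := by
  show sgFw w (sgc0 0) = sgFw w (sgc0 1)
  rw [sgc0_zero, sgc0_one]

lemma sgcw_continuous (w : List (Fin 3)) : Continuous (sgcw w) := by
  show Continuous fun t => sgFw w (sgc0 t)
  exact (sgFw_cont w).comp sgc0_cont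

include hKne hKcpt hKfix in
lemma comp_contOn {f : ℝ × ℝ → 𝕋c} (hf : ContinuousOn f K) (w : List (Fin 3)) :
    ContinuousOn (fun t => f (sgcw w t)) (Icc 0 1) :=
  hf.comp (sgcw_continuous w).continuousOn
    (fun t ht => sgcw_mem_K hKne hKcpt hKfix ht)

include hKne hKcpt hKfix in
/-- Forward direction: homotopic maps have equal windings. -/
lemma homotopic_windings {f g : ℝ × ℝ → 𝕋c} (hf : ContinuousOn f K)
    (hg : ContinuousOn g K) {F : ℝ × (ℝ × ℝ) → 𝕋c}
    (hFc : ContinuousOn F (Icc (0:ℝ) 1 ×ˢ K))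
    (hF0 : ∀ x ∈ K, F (0, x) = f x) (hF1 : ∀ x ∈ K, F (1, x) = g x)
    (w : List (Fin 3)) (k : ℤ) :
    HasWinding (fun t => f (sgcw w t)) k ↔ HasWinding (fun t => g (sgcw w t)) k := by
  set c : ℝ → ℝ × ℝ := sgcw w with hc
  set G : ℝ → ℝ → 𝕋c := fun s t => F (s, c t) with hG
  have hmemc : ∀ t ∈ Icc (0:ℝ) 1, c t ∈ K := fun t ht => sgcw_mem_K hKne hKcpt hKfix ht
  have hGcont : ∀ s ∈ Icc (0:ℝ) 1, ContinuousOn (G s) (Icc 0 1) := by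
    intro s hs
    apply hFc.comp (Continuous.continuousOn (continuous_const.prodMk (sgcw_continuous w)))
    intro t ht
    exact ⟨hs, hmemc t ht⟩
  have hGloop : ∀ s : ℝ, G s 0 = G s 1 := by
    intro s
    show F (s, c 0) = F (s, c 1)
    rw [show c 0 = c 1 from sgcw_loop w]
  -- uniform continuity in the time variable
  obtain ⟨δ, hδ, hΦ⟩ : ∃ δ > 0, ∀ p ∈ (Icc (0:ℝ) 1 ×ˢ Icc (0:ℝ) 1),
      ∀ q ∈ (Icc (0:ℝ) 1 ×ˢ Icc (0:ℝ) 1), dist p q < δ →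
        ‖F (p.1, c p.2) - F (q.1, c q.2)‖ < 2⁻¹ := by
    have hcomp : ContinuousOn (fun p : ℝ × ℝ => F (p.1, c p.2))
        (Icc (0:ℝ) 1 ×ˢ Icc (0:ℝ) 1) := by
      apply hFc.comp (Continuous.continuousOn (continuous_fst.prodMk ((sgcw_continuous w).comp continuous_snd)))
      intro p hp
      exact ⟨hp.1, hmemc p.2 hp.2⟩
    have := (isCompact_Icc.prod isCompact_Icc).uniformContinuousOn_of_continuous hcomp
    rw [Metric.uniformContinuousOn_iff] at this
    obtain ⟨δ, h1, h2⟩ := this 2⁻¹ (by norm_num)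
    exact ⟨δ, h1, fun p hp q hq hpq => by
      have := h2 p hp q hq hpq; rwa [dist_eq_norm] at this⟩
  have key : ∀ s ∈ Icc (0:ℝ) 1, ∀ s' ∈ Icc (0:ℝ) 1, |s' - s| < δ →
      ∀ k : ℤ, HasWinding (G s) k → HasWinding (G s') k := by
    intro s hs s' hs' hss k hk
    apply close_winding (hGcont s hs) (hGcont s' hs') (hGloop s) (hGloop s') ?_ hk
    intro t ht
    have := hΦ (s', t) ⟨hs', ht⟩ (s, t) ⟨hs, ht⟩ (by
      rw [Prod.dist_eq]
      simp only [dist_self]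
      rw [Real.dist_eq]
      calc max |s' - s| 0 = |s' - s| := max_eq_left (abs_nonneg _)
        _ < δ := hss)
    exact this
  obtain ⟨N, hN⟩ := exists_nat_one_div_lt hδ
  set M : ℝ := (N:ℝ) + 1 with hM
  have hM0 : (0:ℝ) < M := by positivity
  have chain : ∀ j : ℕ, (j:ℝ) ≤ M →
      ∀ k : ℤ, (HasWinding (G 0) k ↔ HasWinding (G ((j:ℝ)/M)) k) := by
    intro j
    induction j with
    | zero => intro _ k; simp
    | succ j ih =>
      intro hj k
      have hjM : (j:ℝ) ≤ M := by push_cast at hj ⊢; linarith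
      have hmem1 : (j:ℝ)/M ∈ Icc (0:ℝ) 1 := ⟨by positivity, by rw [div_le_one hM0]; linarith⟩
      have hmem2 : ((j+1:ℕ):ℝ)/M ∈ Icc (0:ℝ) 1 := by
        constructor
        · positivity
        · rw [div_le_one hM0]; push_cast at hj ⊢; linarith
      have hd : |((j+1:ℕ):ℝ)/M - (j:ℝ)/M| < δ := by
        push_cast
        rw [div_sub_div_same]
        have : ((j:ℝ) + 1 - j) = 1 := by ring
        rw [this, abs_of_pos (by positivity)]
        rw [hM]; exact hN
      constructor
      · intro hk
        exact key _ hmem1 _ hmem2 hd k ((ih hjM k).mp hk)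
      · intro hk
        have := key _ hmem2 _ hmem1 (by rwa [abs_sub_comm] at hd) k hk
        exact (ih hjM k).mpr this
  have hM1 : ((N+1:ℕ):ℝ) = M := by rw [hM]; push_cast; ring
  have heq1 : ((N+1:ℕ):ℝ)/M = 1 := by rw [hM1]; exact div_self (ne_of_gt hM0)
  have hiff := chain (N+1) (le_of_eq hM1) k
  rw [heq1] at hiff
  -- identify endpoints
  have e0 : ∀ k : ℤ, HasWinding (fun t => f (sgcw w t)) k ↔ HasWinding (G 0) k := by
    intro k
    constructor
    · exact hasWinding_congr (fun t ht => (hF0 (c t) (hmemc t ht)).symm)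
    · exact hasWinding_congr (fun t ht => hF0 (c t) (hmemc t ht))
  have e1 : ∀ k : ℤ, HasWinding (G 1) k ↔ HasWinding (fun t => g (sgcw w t)) k := by
    intro k
    constructor
    · exact hasWinding_congr (fun t ht => hF1 (c t) (hmemc t ht))
    · exact hasWinding_congr (fun t ht => (hF1 (c t) (hmemc t ht)).symm)
  rw [e0 k, hiff, e1 k]

include hKne hKcpt hKfix in
/-- Backward direction: equal windings give a homotopy. -/
lemma windings_homotopic {f g : ℝ × ℝ → 𝕋c} (hf : ContinuousOn f K)
    (hg : ContinuousOn g K)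
    (hwind : ∀ (w : List (Fin 3)) (k : ℤ),
      HasWinding (fun t => f (sgcw w t)) k ↔ HasWinding (fun t => g (sgcw w t)) k) :
    ∃ F : ℝ × (ℝ × ℝ) → 𝕋c, ContinuousOn F (Icc (0:ℝ) 1 ×ˢ K) ∧
      (∀ x ∈ K, F (0, x) = f x) ∧ (∀ x ∈ K, F (1, x) = g x) := by
  set h : ℝ × ℝ → 𝕋c := fun x => g x - f x with hh
  have hconth : ContinuousOn h K := hg.sub hf
  have hw : ∀ u : List (Fin 3), HasWinding (fun t => h (sgcw u t)) 0 := by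
    intro u
    have hloopf : (fun t => f (sgcw u t)) 0 = (fun t => f (sgcw u t)) 1 := by
      simp only
      rw [sgcw_loop u]
    obtain ⟨k₀, hk₀⟩ := exists_winding (comp_contOn hKne hKcpt hKfix hf u) hloopf
    have hkg : HasWinding (fun t => g (sgcw u t)) k₀ := (hwind u k₀).mp hk₀
    have := hasWinding_sub hk₀ hkg
    rw [sub_self] at this
    exact this
  obtain ⟨H, hHc, hHe⟩ := main_lift hKne hKcpt hKfix hconth hw
  refine ⟨fun p => f p.2 + ((p.1 * H p.2 : ℝ) : 𝕋c), ?_, ?_, ?_⟩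
  · apply ContinuousOn.add
    · exact hf.comp continuous_snd.continuousOn (fun p hp => hp.2)
    · apply (AddCircle.continuous_mk' 1).comp_continuousOn
      exact continuous_fst.continuousOn.mul
        (hHc.comp continuous_snd.continuousOn (fun p hp => hp.2))
  · intro x hx
    show f x + ((0 * H x : ℝ) : 𝕋c) = f x
    rw [zero_mul]
    show f x + ((0:ℝ) : 𝕋c) = f x
    rw [show (((0:ℝ)) : 𝕋c) = 0 from rfl, add_zero]
  · intro x hx
    show f x + ((1 * H x : ℝ) : 𝕋c) = g x
    rw [one_mul, hHe x hx, hh]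
    show f x + (g x - f x) = g x
    rw [add_comm]
    first
      | rw [sub_add_cancel]
      | rw [sub_add_cancel_right]
      | abel

end Kfacts

end SGaux

/-- Theorem 2.4 of [MM2024]. Two continuous maps `f, g` from the
Sierpinski gasket `K` to the circle `𝕋` are homotopic if and only if, for every
word `w`, the winding numbers of `f ∘ c_w` and `g ∘ c_w` agree. -/
theorem statement0
    (K : Set (ℝ × ℝ)) (hKne : K.Nonempty) (hKcpt : IsCompact K)
    (hKfix : K = ⋃ i : Fin 3, sgF i '' K)
    (f g : ℝ × ℝ → 𝕋c) (hf : ContinuousOn f K) (hg : ContinuousOn g K) :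
    (∃ F : ℝ × (ℝ × ℝ) → 𝕋c,
        ContinuousOn F (Set.Icc (0:ℝ) 1 ×ˢ K) ∧
        (∀ x ∈ K, F (0, x) = f x) ∧ (∀ x ∈ K, F (1, x) = g x)) ↔
      (∀ (w : List (Fin 3)) (k : ℤ),
        HasWinding (fun t => f (sgcw w t)) k ↔ HasWinding (fun t => g (sgcw w t)) k) := by
  constructor
  · rintro ⟨F, hFc, hF0, hF1⟩ w k
    exact SGaux.homotopic_windings hKne hKcpt hKfix hf hg hFc hF0 hF1 w k
  · intro hwind
    exact SGaux.windings_homotopic hKne hKcpt hKfix hf hg hwind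

end
end

section
/- Fix m ≥ 1 and f : V_{m−1} → ℝ. Then min{ ℰₘ(g) : g : Vₘ → ℝ, g|_{V_{m−1}} = f } = ℰ_{m−1}(f), and the minimizing extension g is unique. Consequently, for every f ∈ C(K,ℝ) the sequence m ↦ ℰₘ(f|_{Vₘ}) is nondecreasing. -/
open Filter
open scoped ENNReal

noncomputable section

/-! ## Auxiliary development for statement4 -/

namespace SG4

lemma s3pos : (0:ℝ) < Real.sqrt 3 := by positivity
lemma s3sq : Real.sqrt 3 ^ 2 = 3 := Real.sq_sqrt (by norm_num)

def T : Set (ℝ × ℝ) :=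
  {p | 0 ≤ p.2 ∧ p.2 ≤ Real.sqrt 3 * p.1 ∧ p.2 ≤ Real.sqrt 3 * (1 - p.1)}

lemma sgF_apply (i : Fin 3) (x : ℝ × ℝ) :
    sgF i x = ((x.1 + (sgvtx i).1)/2, (x.2 + (sgvtx i).2)/2) := by
  simp only [sgF, Prod.smul_def, Prod.ext_iff, Prod.fst_add, Prod.snd_add, smul_eq_mul]
  constructor <;> ring

lemma vtx_mem_T (i : Fin 3) : sgvtx i ∈ T := by
  have h := s3pos
  fin_cases i <;>
    refine ⟨?_, ?_, ?_⟩ <;>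
    simp [sgvtx, sgv1, sgv2, sgv3, T] <;> nlinarith [s3sq]

lemma sgF_mem_T {i : Fin 3} {x : ℝ × ℝ} (hx : x ∈ T) : sgF i x ∈ T := by
  obtain ⟨h1, h2, h3⟩ := hx
  have h := s3pos
  have hs := s3sq
  rw [sgF_apply]
  fin_cases i <;>
    refine ⟨?_, ?_, ?_⟩ <;>
    simp only [sgvtx, sgv1, sgv2, sgv3] <;> nlinarith

lemma sgF_injective (i : Fin 3) : Function.Injective (sgF i) := by
  intro a b hab
  rw [sgF_apply, sgF_apply, Prod.ext_iff] at hab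
  obtain ⟨h1, h2⟩ := hab
  exact Prod.ext (by dsimp at *; linarith) (by dsimp at *; linarith)

lemma mem_sgF_image {i : Fin 3} {S : Set (ℝ × ℝ)} {x : ℝ × ℝ} :
    x ∈ sgF i '' S ↔ (2*x.1 - (sgvtx i).1, 2*x.2 - (sgvtx i).2) ∈ S := by
  constructor
  · rintro ⟨y, hy, rfl⟩
    have h : (2*(sgF i y).1 - (sgvtx i).1, 2*(sgF i y).2 - (sgvtx i).2) = y := by
      rw [sgF_apply]; exact Prod.ext (by dsimp; ring) (by dsimp; ring)
    rwa [h]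
  · intro h
    refine ⟨_, h, ?_⟩
    rw [sgF_apply]; exact Prod.ext (by dsimp; ring) (by dsimp; ring)

set_option maxHeartbeats 2000000 in
lemma base_int {i j : Fin 3} (hij : i ≠ j) {x : ℝ × ℝ}
    (hi : x ∈ sgF i '' T) (hj : x ∈ sgF j '' T) :
    x = sgF i (sgvtx j) := by
  rw [mem_sgF_image] at hi hj
  obtain ⟨a, b⟩ := x
  have h := s3pos
  have hs := s3sq
  fin_cases i <;> fin_cases j <;>
  · first
    | exact absurd rfl hij
    | (obtain ⟨hi1, hi2, hi3⟩ := hi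
       obtain ⟨hj1, hj2, hj3⟩ := hj
       rw [sgF_apply]
       simp only [sgvtx, sgv1, sgv2, sgv3] at *
       dsimp at *
       refine Prod.ext ?_ ?_ <;> dsimp <;>
         nlinarith [mul_le_mul_of_nonneg_left hi2 h.le, mul_le_mul_of_nonneg_left hi3 h.le,
           mul_le_mul_of_nonneg_left hj2 h.le, mul_le_mul_of_nonneg_left hj3 h.le,
           mul_le_mul_of_nonneg_left hi1 h.le, mul_le_mul_of_nonneg_left hj1 h.le])

end SG4

namespace SG4

lemma sgFw_nil : sgFw [] = id := rfl
lemma sgFw_cons (i : Fin 3) (w : List (Fin 3)) : sgFw (i :: w) = sgF i ∘ sgFw w := rfl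

lemma sgFw_append (w w' : List (Fin 3)) : sgFw (w ++ w') = sgFw w ∘ sgFw w' := by
  induction w with
  | nil => rfl
  | cons a u ih => simp [List.cons_append, sgFw_cons, ih]; rfl

lemma sgFw_injective (w : List (Fin 3)) : Function.Injective (sgFw w) := by
  induction w with
  | nil => exact fun a b h => h
  | cons a u ih => exact fun x y h => ih (sgF_injective a h)

lemma sgFw_mem_T {w : List (Fin 3)} {x : ℝ × ℝ} (hx : x ∈ T) : sgFw w x ∈ T := by
  induction w with
  | nil => exact hx
  | cons a u ih => exact sgF_mem_T ih

lemma sgFw_image_subset_T (w : List (Fin 3)) : sgFw w '' T ⊆ T := by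
  rintro x ⟨y, hy, rfl⟩; exact sgFw_mem_T hy

/-- a corner of `T` lies in `F_c(T)` only for its own index -/
lemma corner_case {b c : Fin 3} (h : sgvtx b ∈ sgF c '' T) : c = b := by
  rw [mem_sgF_image] at h
  obtain ⟨h1, h2, h3⟩ := h
  have hp := s3pos
  have hs := s3sq
  fin_cases b <;> fin_cases c <;>
    first
    | rfl
    | (exfalso; simp only [sgvtx, sgv1, sgv2, sgv3] at h1 h2 h3; try dsimp at h1 h2 h3
       all_goals nlinarith)

/-- corners in a cell are fixed points of the cell map -/
lemma corner_fix {b : Fin 3} {w : List (Fin 3)} (h : sgvtx b ∈ sgFw w '' T) :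
    sgFw w (sgvtx b) = sgvtx b := by
  induction w with
  | nil => rfl
  | cons c u ih =>
    rw [sgFw_cons, Set.image_comp] at h
    have hc : c = b := corner_case (Set.image_mono (sgFw_image_subset_T u) h)
    subst hc
    obtain ⟨y, hy, hyx⟩ := h
    have hFb : sgF c (sgvtx c) = sgvtx c := by
      rw [sgF_apply]; exact Prod.ext (by dsimp; ring) (by dsimp; ring)
    have hy' : y = sgvtx c := sgF_injective c (by rw [hyx, hFb])
    rw [sgFw_cons]
    have := ih (hy' ▸ hy)
    simp only [Function.comp_apply, this, hFb]

/-- Main geometric lemma: two distinct cells of the same level meet in at most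
one point, which is moreover a vertex of each. -/
lemma cell_int : ∀ (w w' : List (Fin 3)), w.length = w'.length → w ≠ w' →
    ∀ x y : ℝ × ℝ, x ∈ sgFw w '' T → x ∈ sgFw w' '' T →
      y ∈ sgFw w '' T → y ∈ sgFw w' '' T →
      x = y ∧ ∃ i, x = sgFw w (sgvtx i) := by
  intro w
  induction w with
  | nil => intro w' hl hne; exact absurd (List.length_eq_zero_iff.mp hl.symm).symm hne
  | cons a u ih =>
    rintro (_ | ⟨b, u'⟩) hl hne x y hxw hxw' hyw hyw'
    · exact absurd hl (by simp)
    by_cases hab : a = b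
    · subst hab
      have hne' : u ≠ u' := fun h => hne (by rw [h])
      have hl' : u.length = u'.length := by simpa using hl
      rw [sgFw_cons, Set.image_comp] at hxw hxw' hyw hyw'
      obtain ⟨x1, hx1, hx1e⟩ := hxw
      obtain ⟨x2, hx2, hx2e⟩ := hxw'
      obtain ⟨y1, hy1, hy1e⟩ := hyw
      obtain ⟨y2, hy2, hy2e⟩ := hyw'
      have ex : x2 = x1 := sgF_injective a (by rw [hx1e, hx2e])
      have ey : y2 = y1 := sgF_injective a (by rw [hy1e, hy2e])
      subst ex; subst ey
      obtain ⟨hxy, i, hi⟩ := ih u' hl' hne' x2 y2 hx1 hx2 hy1 hy2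
      subst hxy
      refine ⟨by rw [← hx1e, ← hy1e], i, ?_⟩
      rw [← hx1e, hi, sgFw_cons]; rfl
    · have hxa : x ∈ sgF a '' T := by
        rw [sgFw_cons, Set.image_comp] at hxw
        exact Set.image_mono (sgFw_image_subset_T u) hxw
      have hxb : x ∈ sgF b '' T := by
        rw [sgFw_cons, Set.image_comp] at hxw'
        exact Set.image_mono (sgFw_image_subset_T u') hxw'
      have hya : y ∈ sgF a '' T := by
        rw [sgFw_cons, Set.image_comp] at hyw
        exact Set.image_mono (sgFw_image_subset_T u) hyw
      have hyb : y ∈ sgF b '' T := by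
        rw [sgFw_cons, Set.image_comp] at hyw'
        exact Set.image_mono (sgFw_image_subset_T u') hyw'
      have hx : x = sgF a (sgvtx b) := base_int hab hxa hxb
      have hy : y = sgF a (sgvtx b) := base_int hab hya hyb
      refine ⟨by rw [hx, hy], b, ?_⟩
      -- x = F_a (v b) and x ∈ F_a (F_u '' T), so v b ∈ F_u '' T, so F_u v_b = v_b
      rw [sgFw_cons, Set.image_comp] at hxw
      obtain ⟨z, hz, hze⟩ := hxw
      have hzv : z = sgvtx b := sgF_injective a (by rw [hze, ← hx])
      have hvb : sgvtx b ∈ sgFw u '' T := hzv ▸ hz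
      rw [sgFw_cons]
      simp only [Function.comp_apply, corner_fix hvb]
      exact hx

end SG4

namespace SG4

lemma vtx_inj : Function.Injective sgvtx := by
  intro i j h
  rw [Prod.ext_iff] at h
  obtain ⟨h1, h2⟩ := h
  fin_cases i <;> fin_cases j <;> first
    | rfl
    | (exfalso
       simp only [sgvtx, sgv1, sgv2, sgv3] at h1 h2
       try dsimp at h1 h2
       nlinarith [s3pos, s3sq])

set_option maxHeartbeats 800000 in
lemma mid_ne_vtx {j k : Fin 3} (hjk : j ≠ k) (i : Fin 3) :
    sgF j (sgvtx k) ≠ sgvtx i := by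
  have hp := s3pos
  intro h
  rw [sgF_apply, Prod.ext_iff] at h
  obtain ⟨h1, h2⟩ := h
  fin_cases j <;> fin_cases k <;> fin_cases i <;>
    first
    | exact absurd rfl hjk
    | (simp only [sgvtx, sgv1, sgv2, sgv3] at h1 h2
       try dsimp at h1 h2
       nlinarith [s3pos, s3sq])

set_option maxHeartbeats 1000000 in
lemma mid_eq {j k j' k' : Fin 3} (hjk : j ≠ k) (hjk' : j' ≠ k')
    (h : sgF j (sgvtx k) = sgF j' (sgvtx k')) :
    (j = j' ∧ k = k') ∨ (j = k' ∧ k = j') := by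
  have hp := s3pos
  rw [sgF_apply, sgF_apply, Prod.ext_iff] at h
  obtain ⟨h1, h2⟩ := h
  fin_cases j <;> fin_cases k <;> fin_cases j' <;> fin_cases k' <;>
    first
    | exact absurd rfl hjk
    | exact absurd rfl hjk'
    | (left; exact ⟨rfl, rfl⟩)
    | (right; exact ⟨rfl, rfl⟩)
    | (exfalso
       simp only [sgvtx, sgv1, sgv2, sgv3] at h1 h2
       try dsimp at h1 h2
       nlinarith [s3pos, s3sq])

lemma mem_sgV0 {x : ℝ × ℝ} : x ∈ sgV 0 ↔ ∃ i, sgvtx i = x := by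
  constructor
  · intro h
    simp only [sgV, Finset.mem_insert, Finset.mem_singleton] at h
    rcases h with h | h | h
    · exact ⟨0, by simp [sgvtx, h]⟩
    · exact ⟨1, by simp [sgvtx, h]⟩
    · exact ⟨2, by simp [sgvtx, h]⟩
  · rintro ⟨i, rfl⟩
    fin_cases i <;> simp [sgV, sgvtx]

lemma mem_sgV_iff {n : ℕ} {x : ℝ × ℝ} :
    x ∈ sgV n ↔ ∃ w : List (Fin 3), w.length = n ∧ ∃ i, sgFw w (sgvtx i) = x := by
  induction n generalizing x with
  | zero =>
    rw [mem_sgV0]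
    constructor
    · rintro ⟨i, rfl⟩; exact ⟨[], rfl, i, rfl⟩
    · rintro ⟨w, hw, i, rfl⟩
      rw [List.length_eq_zero_iff.mp hw]; exact ⟨i, rfl⟩
  | succ n ih =>
    constructor
    · intro h
      simp only [sgV, Finset.mem_biUnion, Finset.mem_univ, Finset.mem_image, true_and] at h
      obtain ⟨a, y, hy, rfl⟩ := h
      obtain ⟨w, hw, i, rfl⟩ := ih.mp hy
      exact ⟨a :: w, by simp [hw], i, rfl⟩
    · rintro ⟨w, hw, i, rfl⟩
      match w with
      | a :: u =>
        simp only [sgV, Finset.mem_biUnion, Finset.mem_univ, Finset.mem_image, true_and]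
        exact ⟨a, sgFw u (sgvtx i), ih.mpr ⟨u, by simpa using hw, i, rfl⟩, rfl⟩

lemma mem_cell_iff {w : List (Fin 3)} {x : ℝ × ℝ} :
    x ∈ (sgV 0).image (sgFw w) ↔ ∃ i, sgFw w (sgvtx i) = x := by
  rw [Finset.mem_image]
  constructor
  · rintro ⟨y, hy, rfl⟩
    obtain ⟨i, rfl⟩ := mem_sgV0.mp hy
    exact ⟨i, rfl⟩
  · rintro ⟨i, rfl⟩
    exact ⟨sgvtx i, mem_sgV0.mpr ⟨i, rfl⟩, rfl⟩

lemma adj_iff {n : ℕ} {x y : ℝ × ℝ} :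
    sgAdj n x y ↔ ∃ w : List (Fin 3), w.length = n ∧
      ∃ i j, i ≠ j ∧ sgFw w (sgvtx i) = x ∧ sgFw w (sgvtx j) = y := by
  constructor
  · rintro ⟨hxy, w, hw, hx, hy⟩
    obtain ⟨i, hi⟩ := mem_cell_iff.mp hx
    obtain ⟨j, hj⟩ := mem_cell_iff.mp hy
    refine ⟨w, hw, i, j, ?_, hi, hj⟩
    rintro rfl; exact hxy (hi ▸ hj ▸ rfl)
  · rintro ⟨w, hw, i, j, hij, rfl, rfl⟩
    refine ⟨fun h => hij (vtx_inj (sgFw_injective w h)), w, hw,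
      mem_cell_iff.mpr ⟨i, rfl⟩, mem_cell_iff.mpr ⟨j, rfl⟩⟩

/-- the midpoint of an edge of an `n`-cell is not in `V n` -/
lemma mid_not_mem {w : List (Fin 3)} {n : ℕ} (hw : w.length = n) {j k : Fin 3} (hjk : j ≠ k) :
    sgFw w (sgF j (sgvtx k)) ∉ sgV n := by
  intro h
  obtain ⟨w', hw', i, hi⟩ := mem_sgV_iff.mp h
  have hmT : sgF j (sgvtx k) ∈ T := sgF_mem_T (vtx_mem_T k)
  by_cases hww : w = w'
  · subst hww
    exact mid_ne_vtx hjk i (sgFw_injective w hi.symm)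
  · have h1 : sgFw w (sgF j (sgvtx k)) ∈ sgFw w '' T := ⟨_, hmT, rfl⟩
    have h2 : sgFw w (sgF j (sgvtx k)) ∈ sgFw w' '' T := ⟨_, vtx_mem_T i, hi⟩
    obtain ⟨-, i', hi'⟩ := cell_int w w' (by rw [hw, hw']) hww _ _ h1 h2 h1 h2
    exact mid_ne_vtx hjk i' (sgFw_injective w hi')

/-- well-definedness data for midpoints -/
lemma mid_well_defined {w w' : List (Fin 3)} (hl : w.length = w'.length)
    {j k j' k' : Fin 3} (hjk : j ≠ k) (hjk' : j' ≠ k')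
    (h : sgFw w (sgF j (sgvtx k)) = sgFw w' (sgF j' (sgvtx k'))) :
    w = w' ∧ ((j = j' ∧ k = k') ∨ (j = k' ∧ k = j')) := by
  have hmT : sgF j (sgvtx k) ∈ T := sgF_mem_T (vtx_mem_T k)
  have hmT' : sgF j' (sgvtx k') ∈ T := sgF_mem_T (vtx_mem_T k')
  by_cases hww : w = w'
  · subst hww
    exact ⟨rfl, mid_eq hjk hjk' (sgFw_injective w h)⟩
  · exfalso
    have h1 : sgFw w (sgF j (sgvtx k)) ∈ sgFw w '' T := ⟨_, hmT, rfl⟩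
    have h2 : sgFw w (sgF j (sgvtx k)) ∈ sgFw w' '' T := ⟨_, hmT', h.symm⟩
    obtain ⟨-, i', hi'⟩ := cell_int w w' hl hww _ _ h1 h2 h1 h2
    exact mid_ne_vtx hjk i' (sgFw_injective w hi')

end SG4

namespace SG4

/-! ### vertex fixed points and midpoint symmetry -/

lemma sgF_vtx_self (i : Fin 3) : sgF i (sgvtx i) = sgvtx i := by
  rw [sgF_apply]; exact Prod.ext (by dsimp; ring) (by dsimp; ring)

lemma sgF_vtx_comm (j k : Fin 3) : sgF j (sgvtx k) = sgF k (sgvtx j) := by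
  rw [sgF_apply, sgF_apply]; exact Prod.ext (by dsimp; ring) (by dsimp; ring)

/-! ### triangle energy -/

def E3 (a b c : ℝ) : ℝ := (a - b) ^ 2 + (b - c) ^ 2 + (c - a) ^ 2

lemma local_id (a b c x y z : ℝ) :
    E3 a x z + E3 x b y + E3 z y c
      = 3/5 * E3 a b c
        + (2 * ((x - (2*a+2*b+c)/5) ^ 2 + (y - (a+2*b+2*c)/5) ^ 2 + (z - (2*a+b+2*c)/5) ^ 2)
           + (((x - (2*a+2*b+c)/5) - (y - (a+2*b+2*c)/5)) ^ 2
              + ((y - (a+2*b+2*c)/5) - (z - (2*a+b+2*c)/5)) ^ 2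
              + ((z - (2*a+b+2*c)/5) - (x - (2*a+2*b+c)/5)) ^ 2)) := by
  unfold E3; ring

lemma local_ge (a b c x y z : ℝ) :
    3/5 * E3 a b c ≤ E3 a x z + E3 x b y + E3 z y c := by
  rw [local_id a b c x y z]
  nlinarith [sq_nonneg (x - (2*a+2*b+c)/5), sq_nonneg (y - (a+2*b+2*c)/5),
    sq_nonneg (z - (2*a+b+2*c)/5), sq_nonneg ((x - (2*a+2*b+c)/5) - (y - (a+2*b+2*c)/5)),
    sq_nonneg ((y - (a+2*b+2*c)/5) - (z - (2*a+b+2*c)/5)),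
    sq_nonneg ((z - (2*a+b+2*c)/5) - (x - (2*a+2*b+c)/5))]

lemma local_eq (a b c : ℝ) :
    E3 a ((2*a+2*b+c)/5) ((2*a+b+2*c)/5) + E3 ((2*a+2*b+c)/5) b ((a+2*b+2*c)/5)
      + E3 ((2*a+b+2*c)/5) ((a+2*b+2*c)/5) c = 3/5 * E3 a b c := by
  unfold E3; ring

lemma sq3_zero {p q r : ℝ}
    (h : 2 * (p ^ 2 + q ^ 2 + r ^ 2) + ((p - q) ^ 2 + (q - r) ^ 2 + (r - p) ^ 2) = 0) :
    p = 0 ∧ q = 0 ∧ r = 0 := by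
  refine ⟨?_, ?_, ?_⟩ <;>
    nlinarith [sq_nonneg p, sq_nonneg q, sq_nonneg r, sq_nonneg (p - q), sq_nonneg (q - r),
      sq_nonneg (r - p)]

lemma local_eq_iff {a b c x y z : ℝ}
    (h : E3 a x z + E3 x b y + E3 z y c = 3/5 * E3 a b c) :
    x = (2*a+2*b+c)/5 ∧ y = (a+2*b+2*c)/5 ∧ z = (2*a+b+2*c)/5 := by
  rw [local_id a b c x y z] at h
  have hQ : 2 * ((x - (2*a+2*b+c)/5) ^ 2 + (y - (a+2*b+2*c)/5) ^ 2 + (z - (2*a+b+2*c)/5) ^ 2)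
      + (((x - (2*a+2*b+c)/5) - (y - (a+2*b+2*c)/5)) ^ 2
         + ((y - (a+2*b+2*c)/5) - (z - (2*a+b+2*c)/5)) ^ 2
         + ((z - (2*a+b+2*c)/5) - (x - (2*a+2*b+c)/5)) ^ 2) = 0 := by linarith
  obtain ⟨h1, h2, h3⟩ := sq3_zero hQ
  exact ⟨by linarith, by linarith, by linarith⟩

/-! ### the sum over edges as a sum over cells -/

open Classical in
lemma sum_adj (n : ℕ) (t : ℝ × ℝ → ℝ × ℝ → ℝ) :
    (∑ x ∈ sgV n, ∑ y ∈ sgV n, if sgAdj n x y then t x y else 0)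
    = ∑ σ : Fin n → Fin 3, ∑ i : Fin 3, ∑ j : Fin 3,
        if i ≠ j then t (sgFw (List.ofFn σ) (sgvtx i)) (sgFw (List.ofFn σ) (sgvtx j)) else 0 := by
  classical
  rw [← Finset.sum_product']
  rw [← Finset.sum_filter]
  have hrhs : (∑ σ : Fin n → Fin 3, ∑ i : Fin 3, ∑ j : Fin 3,
      if i ≠ j then t (sgFw (List.ofFn σ) (sgvtx i)) (sgFw (List.ofFn σ) (sgvtx j)) else 0)
      = ∑ q ∈ (Finset.univ : Finset ((Fin n → Fin 3) × Fin 3 × Fin 3)).filter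
            (fun q => q.2.1 ≠ q.2.2),
          t (sgFw (List.ofFn q.1) (sgvtx q.2.1)) (sgFw (List.ofFn q.1) (sgvtx q.2.2)) := by
    rw [Finset.sum_filter]
    rw [← Finset.univ_product_univ, Finset.sum_product]
    refine Finset.sum_congr rfl fun σ _ => ?_
    rw [← Finset.univ_product_univ, Finset.sum_product]
  rw [hrhs]
  refine (Finset.sum_bij
    (fun (q : (Fin n → Fin 3) × Fin 3 × Fin 3) _ =>
      ((sgFw (List.ofFn q.1) (sgvtx q.2.1), sgFw (List.ofFn q.1) (sgvtx q.2.2)) : (ℝ×ℝ) × (ℝ×ℝ)))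
    ?_ ?_ ?_ ?_).symm
  · rintro ⟨σ, i, j⟩ hq
    simp only [Finset.mem_filter, Finset.mem_univ, true_and] at hq
    simp only [Finset.mem_filter, Finset.mem_product]
    exact ⟨⟨mem_sgV_iff.mpr ⟨_, List.length_ofFn (f := σ), i, rfl⟩,
      mem_sgV_iff.mpr ⟨_, List.length_ofFn (f := σ), j, rfl⟩⟩,
      adj_iff.mpr ⟨_, List.length_ofFn (f := σ), i, j, hq, rfl, rfl⟩⟩
  · rintro ⟨σ, i, j⟩ hq ⟨σ', i', j'⟩ hq' heq
    simp only [Finset.mem_filter, Finset.mem_univ, true_and] at hq hq'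
    rw [Prod.ext_iff] at heq
    obtain ⟨h1, h2⟩ := heq
    dsimp at h1 h2
    have hww : List.ofFn σ = List.ofFn σ' := by
      by_contra hne
      obtain ⟨hxy, -⟩ := cell_int (List.ofFn σ) (List.ofFn σ') (by simp) hne
        (sgFw (List.ofFn σ) (sgvtx i)) (sgFw (List.ofFn σ) (sgvtx j))
        ⟨_, vtx_mem_T i, rfl⟩ ⟨_, vtx_mem_T i', h1.symm⟩
        ⟨_, vtx_mem_T j, rfl⟩ ⟨_, vtx_mem_T j', h2.symm⟩
      exact hq (vtx_inj (sgFw_injective _ hxy))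
    have hσ : σ = σ' := List.ofFn_injective hww
    subst hσ
    have hi : i = i' := vtx_inj (sgFw_injective _ (hww ▸ h1))
    have hj : j = j' := vtx_inj (sgFw_injective _ (hww ▸ h2))
    simp [hi, hj]
  · rintro ⟨x, y⟩ hp
    simp only [Finset.mem_filter, Finset.mem_product] at hp
    obtain ⟨⟨hx, hy⟩, hadj⟩ := hp
    obtain ⟨w, hw, i, j, hij, hxe, hye⟩ := adj_iff.mp hadj
    subst hw
    refine ⟨⟨w.get, i, j⟩, by simpa using hij, ?_⟩
    simp only [List.ofFn_get]
    rw [Prod.ext_iff]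
    exact ⟨hxe, hye⟩
  · rintro ⟨σ, i, j⟩ hq; rfl

/-! ### energy in terms of cells -/

def cellE (g : ℝ × ℝ → ℝ) (w : List (Fin 3)) : ℝ :=
  E3 (g (sgFw w (sgvtx 0))) (g (sgFw w (sgvtx 1))) (g (sgFw w (sgvtx 2)))

lemma inner_cell (g : ℝ × ℝ → ℝ) (w : List (Fin 3)) :
    (∑ i : Fin 3, ∑ j : Fin 3,
      if i ≠ j then (g (sgFw w (sgvtx j)) - g (sgFw w (sgvtx i))) ^ 2 / 2 else 0)
    = cellE g w := by
  rw [Fin.sum_univ_three]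
  rw [Fin.sum_univ_three, Fin.sum_univ_three, Fin.sum_univ_three]
  simp [Fin.ext_iff, cellE, E3]
  ring

open Classical in
lemma sgE_eq (n : ℕ) (g : ℝ × ℝ → ℝ) :
    sgE n g = (5/3 : ℝ) ^ n * ((1:ℝ)/2) * ∑ σ : Fin n → Fin 3, cellE g (List.ofFn σ) := by
  unfold sgE
  rw [sum_adj n (fun x y => (g y - g x) ^ 2 / 2)]
  congr 1
  exact Finset.sum_congr rfl fun σ _ => inner_cell g (List.ofFn σ)

/-! ### splitting off the last letter -/

def snocEquiv (n : ℕ) : ((Fin n → Fin 3) × Fin 3) ≃ (Fin (n+1) → Fin 3) where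
  toFun p := Fin.snoc p.1 p.2
  invFun σ := (Fin.init σ, σ (Fin.last n))
  left_inv p := by simp [Fin.init_snoc, Fin.snoc_last]
  right_inv σ := by simp [Fin.snoc_init_self]

lemma ofFn_snoc (n : ℕ) (τ : Fin n → Fin 3) (j : Fin 3) :
    List.ofFn (Fin.snoc τ j : Fin (n+1) → Fin 3) = List.ofFn τ ++ [j] := by
  rw [List.ofFn_succ']
  simp [Fin.snoc_castSucc, Fin.snoc_last, List.concat_eq_append]

lemma sum_snoc (n : ℕ) (h : (Fin (n+1) → Fin 3) → ℝ) :
    (∑ σ : Fin (n+1) → Fin 3, h σ)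
      = ∑ τ : Fin n → Fin 3, ∑ j : Fin 3, h (Fin.snoc τ j) := by
  calc (∑ σ : Fin (n+1) → Fin 3, h σ)
      = ∑ p : (Fin n → Fin 3) × Fin 3, h (Fin.snoc p.1 p.2) :=
        (Fintype.sum_equiv (snocEquiv n) _ h fun p => rfl).symm
    _ = ∑ τ : Fin n → Fin 3, ∑ j : Fin 3, h (Fin.snoc τ j) :=
        Fintype.sum_prod_type (f := fun p : (Fin n → Fin 3) × Fin 3 => h (Fin.snoc p.1 p.2))

/-! ### the three subcells of a cell -/

lemma subcell_sum (g : ℝ × ℝ → ℝ) (w : List (Fin 3)) :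
    (∑ j : Fin 3, cellE g (w ++ [j]))
      = E3 (g (sgFw w (sgvtx 0))) (g (sgFw w (sgF 0 (sgvtx 1)))) (g (sgFw w (sgF 0 (sgvtx 2))))
      + E3 (g (sgFw w (sgF 0 (sgvtx 1)))) (g (sgFw w (sgvtx 1))) (g (sgFw w (sgF 1 (sgvtx 2))))
      + E3 (g (sgFw w (sgF 0 (sgvtx 2)))) (g (sgFw w (sgF 1 (sgvtx 2)))) (g (sgFw w (sgvtx 2))) := by
  rw [Fin.sum_univ_three]
  unfold cellE
  rw [sgFw_append, sgFw_append, sgFw_append]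
  simp only [Function.comp_apply, sgFw_cons, sgFw_nil, Function.comp_apply, id_eq]
  rw [sgF_vtx_self 0, sgF_vtx_self 1, sgF_vtx_self 2,
    sgF_vtx_comm 1 0, sgF_vtx_comm 2 0, sgF_vtx_comm 2 1]

end SG4

namespace SG4

open Classical in
def hExt (n : ℕ) (f : ℝ × ℝ → ℝ) (x : ℝ × ℝ) : ℝ :=
  if x ∈ sgV n then f x
  else if hx : ∃ q : List (Fin 3) × Fin 3 × Fin 3, q.1.length = n ∧ q.2.1 ≠ q.2.2 ∧
      sgFw q.1 (sgF q.2.1 (sgvtx q.2.2)) = x then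
    (f (sgFw hx.choose.1 (sgvtx hx.choose.2.1)) + f (sgFw hx.choose.1 (sgvtx hx.choose.2.2))
      + (f (sgFw hx.choose.1 (sgvtx 0)) + f (sgFw hx.choose.1 (sgvtx 1))
         + f (sgFw hx.choose.1 (sgvtx 2)))) / 5
  else 0

lemma hExt_vtx (n : ℕ) (f : ℝ × ℝ → ℝ) {x : ℝ × ℝ} (hx : x ∈ sgV n) :
    hExt n f x = f x := by
  simp only [hExt, if_pos hx]

lemma hExt_mid (n : ℕ) (f : ℝ × ℝ → ℝ) {w : List (Fin 3)} (hw : w.length = n)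
    {j k : Fin 3} (hjk : j ≠ k) :
    hExt n f (sgFw w (sgF j (sgvtx k)))
      = (f (sgFw w (sgvtx j)) + f (sgFw w (sgvtx k))
         + (f (sgFw w (sgvtx 0)) + f (sgFw w (sgvtx 1)) + f (sgFw w (sgvtx 2)))) / 5 := by
  classical
  have hnot : sgFw w (sgF j (sgvtx k)) ∉ sgV n := mid_not_mem hw hjk
  have hx : ∃ q : List (Fin 3) × Fin 3 × Fin 3, q.1.length = n ∧ q.2.1 ≠ q.2.2 ∧
      sgFw q.1 (sgF q.2.1 (sgvtx q.2.2)) = sgFw w (sgF j (sgvtx k)) := ⟨⟨w, j, k⟩, hw, hjk, rfl⟩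
  simp only [hExt, if_neg hnot, dif_pos hx]
  obtain ⟨h1, h2, h3⟩ := hx.choose_spec
  obtain ⟨hwq, hpair⟩ := mid_well_defined (by rw [h1, hw]) h2 hjk h3
  rcases hpair with ⟨hj, hk⟩ | ⟨hj, hk⟩ <;> rw [hwq, hj, hk] <;> ring

lemma exists_ofFn {n : ℕ} {w : List (Fin 3)} (hw : w.length = n) :
    ∃ τ : Fin n → Fin 3, List.ofFn τ = w := by
  subst hw; exact ⟨w.get, List.ofFn_get w⟩

/-- per-cell sum for the harmonic extension -/
lemma hExt_cell (n : ℕ) (f : ℝ × ℝ → ℝ) (τ : Fin n → Fin 3) :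
    (∑ j : Fin 3, cellE (hExt n f) (List.ofFn τ ++ [j]))
      = 3/5 * cellE f (List.ofFn τ) := by
  have hw : (List.ofFn τ).length = n := List.length_ofFn (f := τ)
  have hc : ∀ i, hExt n f (sgFw (List.ofFn τ) (sgvtx i)) = f (sgFw (List.ofFn τ) (sgvtx i)) :=
    fun i => hExt_vtx _ _ (mem_sgV_iff.mpr ⟨_, hw, i, rfl⟩)
  rw [subcell_sum]
  rw [hExt_mid n f hw (show (0:Fin 3) ≠ 1 by decide),
    hExt_mid n f hw (show (0:Fin 3) ≠ 2 by decide),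
    hExt_mid n f hw (show (1:Fin 3) ≠ 2 by decide), hc 0, hc 1, hc 2]
  unfold cellE E3; ring

lemma sgE_hExt (n : ℕ) (f : ℝ × ℝ → ℝ) : sgE (n+1) (hExt n f) = sgE n f := by
  rw [sgE_eq, sgE_eq]
  rw [sum_snoc n (fun σ => cellE (hExt n f) (List.ofFn σ))]
  have h1 : ∀ τ : Fin n → Fin 3,
      (∑ j : Fin 3, cellE (hExt n f) (List.ofFn (Fin.snoc τ j))) = 3/5 * cellE f (List.ofFn τ) := by
    intro τ
    simp_rw [ofFn_snoc]
    exact hExt_cell n f τ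
  rw [Finset.sum_congr rfl fun τ _ => h1 τ]
  rw [← Finset.mul_sum]
  ring

/-- per-cell lower bound for any extension -/
lemma cell_lower {n : ℕ} {f g : ℝ × ℝ → ℝ} (hg : ∀ x ∈ sgV n, g x = f x) (τ : Fin n → Fin 3) :
    3/5 * cellE f (List.ofFn τ) ≤ ∑ j : Fin 3, cellE g (List.ofFn τ ++ [j]) := by
  have hw : (List.ofFn τ).length = n := List.length_ofFn (f := τ)
  have hc : ∀ i, g (sgFw (List.ofFn τ) (sgvtx i)) = f (sgFw (List.ofFn τ) (sgvtx i)) :=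
    fun i => hg _ (mem_sgV_iff.mpr ⟨_, hw, i, rfl⟩)
  rw [subcell_sum, hc 0, hc 1, hc 2]
  exact local_ge _ _ _ _ _ _

lemma sgE_lower {n : ℕ} {f g : ℝ × ℝ → ℝ} (hg : ∀ x ∈ sgV n, g x = f x) :
    sgE n f ≤ sgE (n+1) g := by
  rw [sgE_eq, sgE_eq]
  rw [sum_snoc n (fun σ => cellE g (List.ofFn σ))]
  have h2 : (5/3 : ℝ) ^ n * ((1:ℝ)/2) * ∑ τ : Fin n → Fin 3, cellE f (List.ofFn τ)
      = (5/3 : ℝ) ^ (n+1) * ((1:ℝ)/2) * ∑ τ : Fin n → Fin 3, 3/5 * cellE f (List.ofFn τ) := by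
    rw [← Finset.mul_sum]; ring
  rw [h2]
  refine mul_le_mul_of_nonneg_left (Finset.sum_le_sum fun τ _ => ?_) (by positivity)
  simp_rw [ofFn_snoc]
  exact cell_lower hg τ

/-- energies equal forces each cell to be at the minimum, hence midpoint values forced -/
lemma forced {n : ℕ} {f g : ℝ × ℝ → ℝ} (hg : ∀ x ∈ sgV n, g x = f x)
    (hE : sgE (n+1) g = sgE n f) {w : List (Fin 3)} (hw : w.length = n)
    {j k : Fin 3} (hjk : j ≠ k) :
    g (sgFw w (sgF j (sgvtx k)))
      = (f (sgFw w (sgvtx j)) + f (sgFw w (sgvtx k))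
         + (f (sgFw w (sgvtx 0)) + f (sgFw w (sgvtx 1)) + f (sgFw w (sgvtx 2)))) / 5 := by
  classical
  -- turn energy equality into sum equality
  rw [sgE_eq, sgE_eq, sum_snoc n (fun σ => cellE g (List.ofFn σ))] at hE
  have hpos : (0:ℝ) < (5/3 : ℝ) ^ (n+1) * ((1:ℝ)/2) := by positivity
  have key : (∑ τ : Fin n → Fin 3, ∑ j : Fin 3, cellE g (List.ofFn (Fin.snoc τ j)))
      = 3/5 * ∑ τ : Fin n → Fin 3, cellE f (List.ofFn τ) := by
    refine mul_left_cancel₀ (ne_of_gt hpos) ?_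
    rw [hE]; ring
  have hsum : (∑ τ : Fin n → Fin 3,
      ((∑ j : Fin 3, cellE g (List.ofFn (Fin.snoc τ j))) - 3/5 * cellE f (List.ofFn τ))) = 0 := by
    rw [Finset.sum_sub_distrib, key, ← Finset.mul_sum]
    ring
  have hnn : ∀ τ ∈ (Finset.univ : Finset (Fin n → Fin 3)),
      0 ≤ (∑ j : Fin 3, cellE g (List.ofFn (Fin.snoc τ j))) - 3/5 * cellE f (List.ofFn τ) := by
    intro τ _
    have := cell_lower hg τ
    simp_rw [ofFn_snoc]
    linarith
  have hzero := (Finset.sum_eq_zero_iff_of_nonneg hnn).mp hsum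
  -- specialize to our cell
  obtain ⟨τ, hτ⟩ := exists_ofFn hw
  have hτ0 := hzero τ (Finset.mem_univ τ)
  have hcell : (∑ j : Fin 3, cellE g (List.ofFn τ ++ [j])) = 3/5 * cellE f (List.ofFn τ) := by
    have := hτ0
    simp_rw [ofFn_snoc] at this
    linarith
  rw [hτ] at hcell
  -- unpack via subcell_sum and local_eq_iff
  have hc : ∀ i, g (sgFw w (sgvtx i)) = f (sgFw w (sgvtx i)) :=
    fun i => hg _ (mem_sgV_iff.mpr ⟨_, hw, i, rfl⟩)
  rw [subcell_sum, hc 0, hc 1, hc 2] at hcell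
  have hloc := local_eq_iff (by rw [hcell]; unfold cellE; ring)
  obtain ⟨hx, hy, hz⟩ := hloc
  have hfin : ∀ t : Fin 3, t = 0 ∨ t = 1 ∨ t = 2 := by decide
  rcases hfin j with rfl | rfl | rfl <;> rcases hfin k with rfl | rfl | rfl <;>
    first
    | exact absurd rfl hjk
    | (rw [hx]; ring)
    | (rw [hy]; ring)
    | (rw [hz]; ring)
    | (rw [sgF_vtx_comm, hx]; ring)
    | (rw [sgF_vtx_comm, hy]; ring)
    | (rw [sgF_vtx_comm, hz]; ring)

end SG4

open SG4

/-- The minimum of `ℰₘ` over all extensions of `f : V_{m-1} → ℝ`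
to `Vₘ` equals `ℰ_{m-1}(f)`, the minimizing extension is unique (as a function
on `Vₘ`), and consequently `m ↦ ℰₘ(f|_{Vₘ})` is nondecreasing for every
`f ∈ C(K, ℝ)`. -/
theorem statement4
    (K : Set (ℝ × ℝ)) (hKne : K.Nonempty) (hKcpt : IsCompact K)
    (hKfix : K = ⋃ i : Fin 3, sgF i '' K)
    (m : ℕ) (hm : 1 ≤ m) (f : ℝ × ℝ → ℝ) :
    (∃ g : ℝ × ℝ → ℝ, (∀ x ∈ sgV (m-1), g x = f x) ∧
      sgE m g = sgE (m-1) f ∧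
      ∀ g' : ℝ × ℝ → ℝ, (∀ x ∈ sgV (m-1), g' x = f x) → sgE (m-1) f ≤ sgE m g') ∧
    (∀ g g' : ℝ × ℝ → ℝ,
      (∀ x ∈ sgV (m-1), g x = f x) → (∀ x ∈ sgV (m-1), g' x = f x) →
      sgE m g = sgE (m-1) f → sgE m g' = sgE (m-1) f →
      ∀ x ∈ sgV m, g x = g' x) ∧
    (∀ h : ℝ × ℝ → ℝ, ContinuousOn h K → ∀ k : ℕ, sgE k h ≤ sgE (k+1) h) := by
  obtain ⟨n, rfl⟩ : ∃ n, m = n + 1 := ⟨m - 1, (Nat.succ_pred_eq_of_pos hm).symm⟩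
  simp only [Nat.add_sub_cancel]
  refine ⟨⟨hExt n f, fun x hx => hExt_vtx n f hx, sgE_hExt n f,
      fun g' hg' => sgE_lower hg'⟩, ?_, ?_⟩
  · intro g g' hg hg' hEg hEg' x hx
    obtain ⟨w', hw', i, hi⟩ := mem_sgV_iff.mp hx
    have hne : w' ≠ [] := by intro h; rw [h] at hw'; simp at hw'
    obtain ⟨u, j, rfl⟩ : ∃ u j, w' = u ++ [j] :=
      ⟨w'.dropLast, w'.getLast hne, (List.dropLast_append_getLast hne).symm⟩
    have hu : u.length = n := by simp at hw'; omega
    rw [sgFw_append] at hi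
    simp only [Function.comp_apply, sgFw_cons, sgFw_nil, id_eq] at hi
    by_cases hji : j = i
    · subst hji
      have hx' : sgFw u (sgvtx j) = x := by rw [← hi, sgF_vtx_self]
      have hxn : x ∈ sgV n := mem_sgV_iff.mpr ⟨u, hu, j, hx'⟩
      rw [hg x hxn, hg' x hxn]
    · rw [← hi, forced hg hEg hu hji, forced hg' hEg' hu hji]
  · intro h _ k
    exact sgE_lower fun x _ => rfl


end
end

section
/- There exists a constant C > 0 such that for every f ∈ C(K,ℝ) with ℰ(f) < ∞ and all x, y ∈ K, |f(x) − f(y)| ≤ C √(ℰ(f)) · |x − y|^β, where β = log(5/3)/(2 log 2). -/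
open Filter
open scoped ENNReal

noncomputable section

-- ===== auxiliary development =====

-- my additions
def sgT : Set (ℝ × ℝ) :=
  {p | 0 ≤ p.2 ∧ p.2 ≤ Real.sqrt 3 * p.1 ∧ p.2 ≤ Real.sqrt 3 * (1 - p.1)}

lemma s3_sq : Real.sqrt 3 ^ 2 = 3 := Real.sq_sqrt (by norm_num)
lemma s3_pos : 0 < Real.sqrt 3 := Real.sqrt_pos.2 (by norm_num)
lemma s3_lt : Real.sqrt 3 < 2 := by
  nlinarith [s3_sq, s3_pos]
lemma s3_gt : (4/3 : ℝ) < Real.sqrt 3 := by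
  nlinarith [s3_sq, s3_pos]

lemma sgF_apply (i : Fin 3) (p : ℝ × ℝ) :
    sgF i p = ((p.1 + (sgvtx i).1)/2, (p.2 + (sgvtx i).2)/2) := by
  simp [sgF, Prod.ext_iff, smul_eq_mul]; constructor <;> ring

lemma sgvtx0 : sgvtx 0 = ((0:ℝ), (0:ℝ)) := rfl
lemma sgvtx1 : sgvtx 1 = ((1/2:ℝ), Real.sqrt 3 / 2) := rfl
lemma sgvtx2 : sgvtx 2 = ((1:ℝ), (0:ℝ)) := rfl

lemma sgF_mem_T {p : ℝ × ℝ} (hp : p ∈ sgT) (i : Fin 3) : sgF i p ∈ sgT := by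
  obtain ⟨h1, h2, h3⟩ := hp
  fin_cases i <;>
    simp only [sgF_apply, sgvtx, sgv1, sgv2, sgv3, sgT, Set.mem_setOf_eq] <;>
    exact ⟨by nlinarith [s3_pos], by nlinarith [s3_pos], by nlinarith [s3_pos]⟩

lemma mem_T_bounds {p : ℝ × ℝ} (hp : p ∈ sgT) :
    0 ≤ p.1 ∧ p.1 ≤ 1 ∧ 0 ≤ p.2 ∧ p.2 ≤ 1 := by
  obtain ⟨h1, h2, h3⟩ := hp
  refine ⟨?_, ?_, h1, ?_⟩ <;> nlinarith [s3_pos, s3_lt, s3_gt]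

lemma dist_le_one_of_mem_T {p q : ℝ × ℝ} (hp : p ∈ sgT) (hq : q ∈ sgT) :
    dist p q ≤ 1 := by
  obtain ⟨hp1, hp2, hp3, hp4⟩ := mem_T_bounds hp
  obtain ⟨hq1, hq2, hq3, hq4⟩ := mem_T_bounds hq
  rw [Prod.dist_eq]
  apply max_le <;> rw [Real.dist_eq, abs_le] <;> constructor <;> linarith

-- Core cone inequalities
lemma coreA {a b c d s : ℝ} (hb : 0 ≤ b) (hd : 0 ≤ d) (hba : b ≤ s*a) (hdc : d ≤ s*c)
    (hs : s^2 = 3) (hs0 : 0 < s) :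
    a^2+b^2 ≤ 4/3*((a+c)^2 + (b-d)^2) := by
  have ha : 0 ≤ a := nonneg_of_mul_nonneg_right (hb.trans hba) hs0
  have hc : 0 ≤ c := nonneg_of_mul_nonneg_right (hd.trans hdc) hs0
  nlinarith [sq_nonneg (a - 2*c), sq_nonneg (b - 2*d), mul_nonneg (sub_nonneg.2 hba) (sub_nonneg.2 hdc),
    mul_nonneg (sub_nonneg.2 hba) hd, mul_nonneg (sub_nonneg.2 hdc) hb, mul_nonneg ha hc,
    sq_nonneg (s*a - 2*d), sq_nonneg (s*c - b), mul_nonneg hb hd]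

lemma coreB1 {a b e g s : ℝ} (hb : 0 ≤ b) (hba : b ≤ s*a) (hg1 : s*e ≤ g) (hg2 : -(s*e) ≤ g)
    (hs : s^2 = 3) (hs0 : 0 < s) :
    a^2+b^2 ≤ 4/3*((a+e)^2 + (b+g)^2) := by
  have hg : 0 ≤ g := by nlinarith
  nlinarith [sq_nonneg (a/2 + 2*e), mul_nonneg (sub_nonneg.2 hg1) (sub_nonneg.2 hg2), mul_nonneg hb hg]

lemma coreB2 {a b e g s : ℝ} (hb : 0 ≤ b) (hba : b ≤ s*a) (hg1 : s*e ≤ g) (hg2 : -(s*e) ≤ g)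
    (hs : s^2 = 3) (hs0 : 0 < s) :
    e^2+g^2 ≤ 4/3*((a+e)^2 + (b+g)^2) := by
  have ha : 0 ≤ a := nonneg_of_mul_nonneg_right (hb.trans hba) hs0
  have hg : 0 ≤ g := by nlinarith
  nlinarith [sq_nonneg (e + 2*a), sq_nonneg (g - 2*b), sq_nonneg (g + 2*b), mul_nonneg (sub_nonneg.2 hba) hg,
    mul_nonneg (sub_nonneg.2 hg1) hb, mul_nonneg (sub_nonneg.2 hg2) hb, mul_nonneg ha hg,
    mul_nonneg (sub_nonneg.2 hba) (sub_nonneg.2 hg1), mul_nonneg (sub_nonneg.2 hba) (sub_nonneg.2 hg2),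
    sq_nonneg (s*a - 2*g), sq_nonneg (s*e + b), sq_nonneg (s*e - b), mul_nonneg hb hg]

-- cell membership coordinates
lemma memF0 {p : ℝ × ℝ} (hp : p ∈ sgF 0 '' sgT) :
    0 ≤ p.2 ∧ p.2 ≤ Real.sqrt 3 * p.1 ∧ p.2 ≤ Real.sqrt 3 * (1/2 - p.1) := by
  obtain ⟨t, ⟨h1, h2, h3⟩, rfl⟩ := hp
  simp only [sgF_apply, sgvtx, sgv1]
  exact ⟨by nlinarith [s3_pos], by nlinarith [s3_pos], by nlinarith [s3_pos]⟩

lemma memF1 {p : ℝ × ℝ} (hp : p ∈ sgF 1 '' sgT) :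
    Real.sqrt 3 / 4 ≤ p.2 ∧ p.2 ≤ Real.sqrt 3 * p.1 ∧ p.2 ≤ Real.sqrt 3 * (1 - p.1) := by
  obtain ⟨t, ⟨h1, h2, h3⟩, rfl⟩ := hp
  simp only [sgF_apply, sgvtx, sgv2]
  exact ⟨by nlinarith [s3_pos], by nlinarith [s3_pos], by nlinarith [s3_pos]⟩

lemma memF2 {p : ℝ × ℝ} (hp : p ∈ sgF 2 '' sgT) :
    0 ≤ p.2 ∧ p.2 ≤ Real.sqrt 3 * (p.1 - 1/2) ∧ p.2 ≤ Real.sqrt 3 * (1 - p.1) := by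
  obtain ⟨t, ⟨h1, h2, h3⟩, rfl⟩ := hp
  simp only [sgF_apply, sgvtx, sgv3]
  exact ⟨by nlinarith [s3_pos], by nlinarith [s3_pos], by nlinarith [s3_pos]⟩

lemma sgF_vtx_symm (i j : Fin 3) : sgF i (sgvtx j) = sgF j (sgvtx i) := by
  simp [sgF, add_comm]

set_option maxHeartbeats 2000000 in
/-- Euclidean sector estimate: distance to junction controlled by distance to other cell. -/
lemma sectorE {i j : Fin 3} (hij : i ≠ j) {p q : ℝ × ℝ}
    (hp : p ∈ sgF i '' sgT) (hq : q ∈ sgF j '' sgT) :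
    (p.1 - (sgF i (sgvtx j)).1)^2 + (p.2 - (sgF i (sgvtx j)).2)^2 ≤
      4/3*((p.1-q.1)^2 + (p.2-q.2)^2) := by
  have hs := s3_sq
  have hs0 := s3_pos
  fin_cases i <;> fin_cases j
  · simp at hij
  · -- (0,1)
    obtain ⟨ha1, ha2, ha3⟩ := memF0 (show p ∈ sgF 0 '' sgT from hp)
    obtain ⟨hb1, hb2, hb3⟩ := memF1 (show q ∈ sgF 1 '' sgT from hq)
    have := coreB2 (a := q.1 - 1/4) (b := q.2 - Real.sqrt 3/4) (e := 1/4 - p.1)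
      (g := Real.sqrt 3/4 - p.2) (s := Real.sqrt 3)
      (by nlinarith) (by nlinarith) (by nlinarith) (by nlinarith) hs hs0
    simp only [sgF_apply, sgvtx, sgv1, sgv2]
    nlinarith [this]
  · -- (0,2)
    obtain ⟨ha1, ha2, ha3⟩ := memF0 (show p ∈ sgF 0 '' sgT from hp)
    obtain ⟨hb1, hb2, hb3⟩ := memF2 (show q ∈ sgF 2 '' sgT from hq)
    have := coreA (a := 1/2 - p.1) (b := p.2) (c := q.1 - 1/2) (d := q.2) (s := Real.sqrt 3)
      ha1 hb1 (by nlinarith) (by nlinarith) hs hs0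
    simp only [sgF_apply, sgvtx, sgv1, sgv3]
    nlinarith [this]
  · -- (1,0)
    obtain ⟨ha1, ha2, ha3⟩ := memF1 (show p ∈ sgF 1 '' sgT from hp)
    obtain ⟨hb1, hb2, hb3⟩ := memF0 (show q ∈ sgF 0 '' sgT from hq)
    have := coreB1 (a := p.1 - 1/4) (b := p.2 - Real.sqrt 3/4) (e := 1/4 - q.1)
      (g := Real.sqrt 3/4 - q.2) (s := Real.sqrt 3)
      (by nlinarith) (by nlinarith) (by nlinarith) (by nlinarith) hs hs0
    simp only [sgF_apply, sgvtx, sgv1, sgv2]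
    nlinarith [this]
  · simp at hij
  · -- (1,2)
    obtain ⟨ha1, ha2, ha3⟩ := memF1 (show p ∈ sgF 1 '' sgT from hp)
    obtain ⟨hb1, hb2, hb3⟩ := memF2 (show q ∈ sgF 2 '' sgT from hq)
    have := coreB1 (a := 3/4 - p.1) (b := p.2 - Real.sqrt 3/4) (e := q.1 - 3/4)
      (g := Real.sqrt 3/4 - q.2) (s := Real.sqrt 3)
      (by nlinarith) (by nlinarith) (by nlinarith) (by nlinarith) hs hs0
    simp only [sgF_apply, sgvtx, sgv2, sgv3]
    nlinarith [this]
  · -- (2,0)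
    obtain ⟨ha1, ha2, ha3⟩ := memF2 (show p ∈ sgF 2 '' sgT from hp)
    obtain ⟨hb1, hb2, hb3⟩ := memF0 (show q ∈ sgF 0 '' sgT from hq)
    have := coreA (a := p.1 - 1/2) (b := p.2) (c := 1/2 - q.1) (d := q.2) (s := Real.sqrt 3)
      ha1 hb1 (by nlinarith) (by nlinarith) hs hs0
    simp only [sgF_apply, sgvtx, sgv1, sgv3]
    nlinarith [this]
  · -- (2,1)
    obtain ⟨ha1, ha2, ha3⟩ := memF2 (show p ∈ sgF 2 '' sgT from hp)
    obtain ⟨hb1, hb2, hb3⟩ := memF1 (show q ∈ sgF 1 '' sgT from hq)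
    have := coreB2 (a := 3/4 - q.1) (b := q.2 - Real.sqrt 3/4) (e := p.1 - 3/4)
      (g := Real.sqrt 3/4 - p.2) (s := Real.sqrt 3)
      (by nlinarith) (by nlinarith) (by nlinarith) (by nlinarith) hs hs0
    simp only [sgF_apply, sgvtx, sgv2, sgv3]
    nlinarith [this]
  · simp at hij

lemma abs_fst_le_dist (p q : ℝ × ℝ) : |p.1 - q.1| ≤ dist p q := by
  rw [Prod.dist_eq]; exact le_max_of_le_left (le_of_eq (Real.dist_eq _ _).symm)

lemma abs_snd_le_dist (p q : ℝ × ℝ) : |p.2 - q.2| ≤ dist p q := by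
  rw [Prod.dist_eq]; exact le_max_of_le_right (le_of_eq (Real.dist_eq _ _).symm)

lemma dist_sq_le (p q : ℝ × ℝ) : dist p q ^ 2 ≤ (p.1 - q.1)^2 + (p.2 - q.2)^2 := by
  rw [Prod.dist_eq]
  rcases max_cases (dist p.1 q.1) (dist p.2 q.2) with ⟨h, _⟩ | ⟨h, _⟩ <;> rw [h, Real.dist_eq] <;>
    nlinarith [sq_abs (p.1 - q.1), sq_abs (p.2 - q.2), sq_nonneg (p.1 - q.1), sq_nonneg (p.2 - q.2)]

lemma sq_le_dist_sq (p q : ℝ × ℝ) : (p.1 - q.1)^2 + (p.2 - q.2)^2 ≤ 2 * dist p q ^ 2 := by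
  have h1 := abs_fst_le_dist p q
  have h2 := abs_snd_le_dist p q
  nlinarith [sq_abs (p.1 - q.1), sq_abs (p.2 - q.2), abs_nonneg (p.1 - q.1), abs_nonneg (p.2-q.2),
    dist_nonneg (x := p) (y := q)]

/-- Sup-metric sector estimate. -/
lemma sector {i j : Fin 3} (hij : i ≠ j) {p q : ℝ × ℝ}
    (hp : p ∈ sgF i '' sgT) (hq : q ∈ sgF j '' sgT) :
    dist p (sgF i (sgvtx j)) ≤ 2 * dist p q := by
  have h := sectorE hij hp hq
  have h1 := dist_sq_le p (sgF i (sgvtx j))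
  have h2 := sq_le_dist_sq p q
  have h3 : dist p (sgF i (sgvtx j)) ^ 2 ≤ (2 * dist p q)^2 := by nlinarith
  nlinarith [h3, dist_nonneg (x := p) (y := q), dist_nonneg (x := p) (y := sgF i (sgvtx j))]

/-- A vertex is far from the opposite cells. -/
lemma vtx_far {i j : Fin 3} (hij : i ≠ j) {p : ℝ × ℝ} (hp : p ∈ sgF i '' sgT) :
    (1/3 : ℝ) ≤ dist p (sgvtx j) := by
  have hs0 := s3_pos
  have hsg := s3_gt
  fin_cases i <;> fin_cases j
  · simp at hij
  · -- i=0, j=1 : p.2 ≤ √3/4, vtx has y = √3/2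
    obtain ⟨h1, h2, h3⟩ := memF0 (show p ∈ sgF 0 '' sgT from hp)
    refine le_trans ?_ (abs_snd_le_dist p _)
    simp only [sgvtx, sgv2]
    rw [abs_sub_comm, le_abs]; left; nlinarith
  · obtain ⟨h1, h2, h3⟩ := memF0 (show p ∈ sgF 0 '' sgT from hp)
    refine le_trans ?_ (abs_fst_le_dist p _)
    simp only [sgvtx, sgv3]
    rw [abs_sub_comm, le_abs]; left; nlinarith
  · obtain ⟨h1, h2, h3⟩ := memF1 (show p ∈ sgF 1 '' sgT from hp)
    refine le_trans ?_ (abs_snd_le_dist p _)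
    simp only [sgvtx, sgv1]
    rw [le_abs]; left; nlinarith
  · simp at hij
  · obtain ⟨h1, h2, h3⟩ := memF1 (show p ∈ sgF 1 '' sgT from hp)
    refine le_trans ?_ (abs_snd_le_dist p _)
    simp only [sgvtx, sgv3]
    rw [le_abs]; left; nlinarith
  · obtain ⟨h1, h2, h3⟩ := memF2 (show p ∈ sgF 2 '' sgT from hp)
    refine le_trans ?_ (abs_fst_le_dist p _)
    simp only [sgvtx, sgv1]
    rw [le_abs]; left; nlinarith
  · obtain ⟨h1, h2, h3⟩ := memF2 (show p ∈ sgF 2 '' sgT from hp)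
    refine le_trans ?_ (abs_snd_le_dist p _)
    simp only [sgvtx, sgv2]
    rw [abs_sub_comm, le_abs]; left; nlinarith
  · simp at hij
section KFacts

lemma sgF_inj (i : Fin 3) : Function.Injective (sgF i) := by
  intro a b h
  simp only [sgF] at h
  have := congrArg (fun z => (2:ℝ) • z) h
  simpa [smul_smul] using this

lemma sgF_dist (i : Fin 3) (a b : ℝ × ℝ) : dist (sgF i a) (sgF i b) = (1/2) * dist a b := by
  simp only [sgF]
  rw [dist_smul₀]
  simp [dist_add_right]

lemma sgFw_cons (i : Fin 3) (w : List (Fin 3)) : sgFw (i :: w) = sgF i ∘ sgFw w := rfl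

lemma sgFw_append (w w' : List (Fin 3)) : sgFw (w ++ w') = sgFw w ∘ sgFw w' := by
  induction w with
  | nil => rfl
  | cons i t ih => simp [List.cons_append, sgFw_cons, ih, Function.comp_assoc]

lemma sgFw_dist (w : List (Fin 3)) (a b : ℝ × ℝ) :
    dist (sgFw w a) (sgFw w b) = (1/2)^w.length * dist a b := by
  induction w with
  | nil => simp [sgFw]
  | cons i t ih => simp [sgFw_cons, sgF_dist, ih]; ring

lemma sgF_cont (i : Fin 3) : Continuous (sgF i) := by
  unfold sgF; fun_prop

lemma sgFw_cont (w : List (Fin 3)) : Continuous (sgFw w) := by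
  induction w with
  | nil => exact continuous_id
  | cons i t ih => exact (sgF_cont i).comp ih

lemma sgF_fix (i : Fin 3) : sgF i (sgvtx i) = sgvtx i := by
  simp only [sgF]
  rw [← two_smul ℝ (sgvtx i), smul_smul]
  norm_num

lemma sgT_closed : IsClosed sgT := by
  have h1 : IsClosed {p : ℝ × ℝ | 0 ≤ p.2} := isClosed_le continuous_const continuous_snd
  have h2 : IsClosed {p : ℝ × ℝ | p.2 ≤ Real.sqrt 3 * p.1} :=
    isClosed_le continuous_snd (continuous_const.mul continuous_fst)
  have h3 : IsClosed {p : ℝ × ℝ | p.2 ≤ Real.sqrt 3 * (1 - p.1)} :=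
    isClosed_le continuous_snd (continuous_const.mul (continuous_const.sub continuous_fst))
  have he : sgT = {p : ℝ × ℝ | 0 ≤ p.2} ∩ ({p : ℝ × ℝ | p.2 ≤ Real.sqrt 3 * p.1} ∩ {p : ℝ × ℝ | p.2 ≤ Real.sqrt 3 * (1 - p.1)}) := rfl
  rw [he]; exact h1.inter (h2.inter h3)

end KFacts

section KDep

variable {K : Set (ℝ × ℝ)} (hKne : K.Nonempty) (hKcpt : IsCompact K)
  (hKfix : K = ⋃ i : Fin 3, sgF i '' K)

section
include hKfix

lemma sgF_mapsK (i : Fin 3) : sgF i '' K ⊆ K := by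
  intro x hx
  rw [hKfix]
  exact Set.mem_iUnion.2 ⟨i, hx⟩

lemma sgF_memK {i : Fin 3} {x : ℝ × ℝ} (hx : x ∈ K) : sgF i x ∈ K :=
  sgF_mapsK hKfix i ⟨x, hx, rfl⟩

lemma sgFw_memK {w : List (Fin 3)} {x : ℝ × ℝ} (hx : x ∈ K) : sgFw w x ∈ K := by
  induction w with
  | nil => exact hx
  | cons i t ih => exact sgF_memK hKfix ih

lemma K_decomp {x : ℝ × ℝ} (hx : x ∈ K) : ∃ i : Fin 3, ∃ y ∈ K, x = sgF i y := by
  rw [hKfix] at hx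
  obtain ⟨i, y, hy, rfl⟩ := Set.mem_iUnion.1 hx
  exact ⟨i, y, hy, rfl⟩

lemma K_word {x : ℝ × ℝ} (hx : x ∈ K) (n : ℕ) :
    ∃ w : List (Fin 3), w.length = n ∧ ∃ y ∈ K, x = sgFw w y := by
  induction n with
  | zero => exact ⟨[], rfl, x, hx, rfl⟩
  | succ n ih =>
    obtain ⟨w, hw, y, hy, rfl⟩ := ih
    obtain ⟨i, z, hz, rfl⟩ := K_decomp hKfix hy
    exact ⟨w ++ [i], by simp [hw], z, hz, by rw [sgFw_append]; rfl⟩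

include hKne hKcpt

lemma vtx_memK (i : Fin 3) : sgvtx i ∈ K := by
  obtain ⟨x0, hx0⟩ := hKne
  have hseq : ∀ n : ℕ, (sgF i)^[n] x0 ∈ K := by
    intro n; induction n with
    | zero => exact hx0
    | succ n ih => rw [Function.iterate_succ_apply']; exact sgF_memK hKfix ih
  have hdist : ∀ n : ℕ, dist ((sgF i)^[n] x0) (sgvtx i) = (1/2)^n * dist x0 (sgvtx i) := by
    intro n; induction n with
    | zero => simp
    | succ n ih =>
      rw [Function.iterate_succ_apply']
      calc dist (sgF i ((sgF i)^[n] x0)) (sgvtx i)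
          = dist (sgF i ((sgF i)^[n] x0)) (sgF i (sgvtx i)) := by rw [sgF_fix]
        _ = (1/2) * ((1/2)^n * dist x0 (sgvtx i)) := by rw [sgF_dist, ih]
        _ = (1/2)^(n+1) * dist x0 (sgvtx i) := by ring
  have htend : Filter.Tendsto (fun n => (sgF i)^[n] x0) Filter.atTop (nhds (sgvtx i)) := by
    rw [tendsto_iff_dist_tendsto_zero]
    simp only [hdist]
    have := (tendsto_pow_atTop_nhds_zero_of_lt_one (by norm_num : (0:ℝ) ≤ 1/2)
      (by norm_num : (1/2:ℝ) < 1)).mul_const (dist x0 (sgvtx i))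
    simpa using this
  exact hKcpt.isClosed.mem_of_tendsto htend (Filter.Eventually.of_forall hseq)

lemma K_sub_T : K ⊆ sgT := by
  intro x hx
  have hv0T : sgvtx 0 ∈ sgT := by
    refine ⟨le_refl _, ?_, ?_⟩ <;> simp [sgvtx, sgv1] <;> positivity
  have hwT : ∀ w : List (Fin 3), sgFw w (sgvtx 0) ∈ sgT := by
    intro w; induction w with
    | nil => exact hv0T
    | cons i t ih => exact sgF_mem_T ih i
  obtain ⟨C, hC⟩ := Metric.isBounded_iff.1 hKcpt.isBounded
  have key : ∀ ε > 0, ∃ t ∈ sgT, dist x t < ε := by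
    intro ε hε
    have h2 : Filter.Tendsto (fun n : ℕ => (1/2:ℝ)^n * C) Filter.atTop (nhds 0) := by
      have := (tendsto_pow_atTop_nhds_zero_of_lt_one (by norm_num : (0:ℝ) ≤ 1/2)
        (by norm_num : (1/2:ℝ) < 1)).mul_const C
      simpa using this
    obtain ⟨n, hn⟩ := (h2.eventually_lt_const hε).exists
    obtain ⟨w, hwlen, y, hy, rfl⟩ := K_word hKfix hx n
    refine ⟨sgFw w (sgvtx 0), hwT w, ?_⟩
    calc dist (sgFw w y) (sgFw w (sgvtx 0)) = (1/2)^w.length * dist y (sgvtx 0) := sgFw_dist _ _ _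
      _ ≤ (1/2)^n * C := by
          rw [hwlen]
          exact mul_le_mul_of_nonneg_left (hC hy (vtx_memK hKne hKcpt hKfix 0)) (by positivity)
      _ < ε := hn
  exact sgT_closed.closure_eq ▸ Metric.mem_closure_iff.2 key

end

end KDep

open Classical in
lemma sgE_sum_nonneg (n : ℕ) (f : ℝ × ℝ → ℝ) (x : ℝ × ℝ) :
    0 ≤ ∑ y ∈ sgV n, if sgAdj n x y then (f y - f x) ^ 2 / 2 else 0 := by
  refine Finset.sum_nonneg fun y _ => ?_
  split <;> positivity

lemma sgE_nonneg (n : ℕ) (f : ℝ × ℝ → ℝ) : 0 ≤ sgE n f := by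
  unfold sgE
  refine mul_nonneg (by positivity) (Finset.sum_nonneg fun x _ => ?_)
  exact sgE_sum_nonneg n f x

lemma sgE_le_toReal {f : ℝ × ℝ → ℝ} (hf : sgEtot f < ⊤) (n : ℕ) :
    sgE n f ≤ (sgEtot f).toReal := by
  have h1 : ENNReal.ofReal (sgE n f) ≤ sgEtot f :=
    le_iSup (fun n => ENNReal.ofReal (sgE n f)) n
  have h2 := ENNReal.toReal_mono hf.ne h1
  rwa [ENNReal.toReal_ofReal (sgE_nonneg n f)] at h2

lemma mem_sgV_of_word {w : List (Fin 3)} {x : ℝ × ℝ}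
    (hx : x ∈ (sgV 0).image (sgFw w)) : x ∈ sgV w.length := by
  induction w generalizing x with
  | nil => simpa [sgFw] using hx
  | cons i t ih =>
    obtain ⟨a, ha, rfl⟩ := Finset.mem_image.1 hx
    have : sgFw t a ∈ sgV t.length := ih (Finset.mem_image.2 ⟨a, ha, rfl⟩)
    show sgF i (sgFw t a) ∈ sgV (t.length + 1)
    exact Finset.mem_biUnion.2 ⟨i, Finset.mem_univ i, Finset.mem_image.2 ⟨_, this, rfl⟩⟩

open Classical in
lemma adj_sq_le {f : ℝ × ℝ → ℝ} {n : ℕ} {x y : ℝ × ℝ}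
    (hf : sgEtot f < ⊤) (h : sgAdj n x y) :
    (f y - f x)^2 ≤ 4 * (3/5)^n * (sgEtot f).toReal := by
  obtain ⟨hne, w, hwl, hx, hy⟩ := h
  have hxV : x ∈ sgV n := hwl ▸ mem_sgV_of_word hx
  have hyV : y ∈ sgV n := hwl ▸ mem_sgV_of_word hy
  have hterm : (f y - f x)^2/2 ≤
      ∑ x' ∈ sgV n, ∑ y' ∈ sgV n, if sgAdj n x' y' then (f y' - f x')^2/2 else 0 := by
    have hinner : (f y - f x)^2/2 ≤
        ∑ y' ∈ sgV n, if sgAdj n x y' then (f y' - f x)^2/2 else 0 := by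
      have := Finset.single_le_sum
        (f := fun y' => if sgAdj n x y' then (f y' - f x)^2/2 else 0)
        (fun z _ => by split <;> positivity) hyV
      rwa [if_pos ⟨hne, w, hwl, hx, hy⟩] at this
    refine hinner.trans ?_
    exact Finset.single_le_sum
      (f := fun x' => ∑ y' ∈ sgV n, if sgAdj n x' y' then (f y' - f x')^2/2 else 0)
      (fun z _ => sgE_sum_nonneg n f z) hxV
  have hE : (5/3:ℝ)^n * (1/2) * ((f y - f x)^2/2) ≤ sgE n f := by
    unfold sgE
    exact mul_le_mul_of_nonneg_left hterm (by positivity)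
  have h2 := hE.trans (sgE_le_toReal hf n)
  have hpow : (0:ℝ) < (5/3)^n := by positivity
  have h35 : ((3:ℝ)/5)^n * (5/3)^n = 1 := by
    rw [← mul_pow]; norm_num
  nlinarith [h2, hpow, pow_nonneg (by norm_num : (0:ℝ) ≤ 3/5) n]

lemma sgF_mem_sgV {n : ℕ} {x : ℝ × ℝ} (hx : x ∈ sgV n) (i : Fin 3) : sgF i x ∈ sgV (n+1) :=
  Finset.mem_biUnion.2 ⟨i, Finset.mem_univ i, Finset.mem_image.2 ⟨x, hx, rfl⟩⟩

lemma adj_comp {n : ℕ} {x y : ℝ × ℝ} (i : Fin 3) (h : sgAdj n x y) :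
    sgAdj (n+1) (sgF i x) (sgF i y) := by
  obtain ⟨hne, w, hwl, hx, hy⟩ := h
  refine ⟨fun hc => hne (sgF_inj i hc), i :: w, by simp [hwl], ?_, ?_⟩
  · obtain ⟨a, ha, rfl⟩ := Finset.mem_image.1 hx
    exact Finset.mem_image.2 ⟨a, ha, rfl⟩
  · obtain ⟨a, ha, rfl⟩ := Finset.mem_image.1 hy
    exact Finset.mem_image.2 ⟨a, ha, rfl⟩

open Classical in
lemma sgE_comp_le (f : ℝ × ℝ → ℝ) (i : Fin 3) (n : ℕ) :
    sgE n (f ∘ sgF i) ≤ (3/5) * sgE (n+1) f := by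
  have hsum : (∑ x ∈ sgV n, ∑ y ∈ sgV n,
        if sgAdj n x y then ((f ∘ sgF i) y - (f ∘ sgF i) x)^2/2 else 0)
      ≤ ∑ x ∈ sgV (n+1), ∑ y ∈ sgV (n+1),
        if sgAdj (n+1) x y then (f y - f x)^2/2 else 0 := by
    rw [← Finset.sum_product' (s := sgV n) (t := sgV n)
      (f := fun x y => if sgAdj n x y then ((f ∘ sgF i) y - (f ∘ sgF i) x)^2/2 else 0),
      ← Finset.sum_product' (s := sgV (n+1)) (t := sgV (n+1))
      (f := fun x y => if sgAdj (n+1) x y then (f y - f x)^2/2 else 0)]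
    have hinj : Set.InjOn (fun p : (ℝ×ℝ)×(ℝ×ℝ) => (sgF i p.1, sgF i p.2))
        ((sgV n ×ˢ sgV n) : Finset _) := by
      intro p _ q _ h
      have h1 := congrArg Prod.fst h
      have h2 := congrArg Prod.snd h
      exact Prod.ext (sgF_inj i h1) (sgF_inj i h2)
    calc (∑ p ∈ sgV n ×ˢ sgV n,
            if sgAdj n p.1 p.2 then ((f ∘ sgF i) p.2 - (f ∘ sgF i) p.1)^2/2 else 0)
        ≤ ∑ p ∈ sgV n ×ˢ sgV n,
            if sgAdj (n+1) (sgF i p.1) (sgF i p.2) then (f (sgF i p.2) - f (sgF i p.1))^2/2 else 0 := by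
          refine Finset.sum_le_sum fun p hp => ?_
          by_cases h : sgAdj n p.1 p.2
          · rw [if_pos h, if_pos (adj_comp i h)]
            exact le_of_eq rfl
          · rw [if_neg h]; split <;> positivity
      _ = ∑ q ∈ (sgV n ×ˢ sgV n).image (fun p : (ℝ×ℝ)×(ℝ×ℝ) => (sgF i p.1, sgF i p.2)),
            if sgAdj (n+1) q.1 q.2 then (f q.2 - f q.1)^2/2 else 0 := by
          exact (Finset.sum_image
            (f := fun q : (ℝ×ℝ)×(ℝ×ℝ) => if sgAdj (n+1) q.1 q.2 then (f q.2 - f q.1)^2/2 else 0)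
            (fun p hp q hq h => hinj hp hq h)).symm
      _ ≤ ∑ q ∈ sgV (n+1) ×ˢ sgV (n+1),
            if sgAdj (n+1) q.1 q.2 then (f q.2 - f q.1)^2/2 else 0 := by
          refine Finset.sum_le_sum_of_subset_of_nonneg ?_ (fun q _ _ => by split <;> positivity)
          intro q hq
          obtain ⟨p, hp, rfl⟩ := Finset.mem_image.1 hq
          obtain ⟨hp1, hp2⟩ := Finset.mem_product.1 hp
          exact Finset.mem_product.2 ⟨sgF_mem_sgV hp1 i, sgF_mem_sgV hp2 i⟩
  unfold sgE
  rw [pow_succ]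
  calc (5/3:ℝ)^n * (1/2) * (∑ x ∈ sgV n, ∑ y ∈ sgV n,
        if sgAdj n x y then ((f ∘ sgF i) y - (f ∘ sgF i) x)^2/2 else 0)
      ≤ (5/3:ℝ)^n * (1/2) * (∑ x ∈ sgV (n+1), ∑ y ∈ sgV (n+1),
        if sgAdj (n+1) x y then (f y - f x)^2/2 else 0) :=
        mul_le_mul_of_nonneg_left hsum (by positivity)
    _ = 3/5 * ((5/3:ℝ)^n * (5/3) * (1/2) * (∑ x ∈ sgV (n+1), ∑ y ∈ sgV (n+1),
        if sgAdj (n+1) x y then (f y - f x)^2/2 else 0)) := by ring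

lemma sgE_compw_le (f : ℝ × ℝ → ℝ) (w : List (Fin 3)) (n : ℕ) :
    sgE n (f ∘ sgFw w) ≤ (3/5)^w.length * sgE (n + w.length) f := by
  induction w generalizing f with
  | nil => simpa [sgFw] using le_of_eq (by norm_num : sgE n (f ∘ id) = sgE n f)
  | cons i t ih =>
    have h1 : f ∘ sgFw (i :: t) = (f ∘ sgF i) ∘ sgFw t := rfl
    rw [h1]
    refine (ih (f ∘ sgF i)).trans ?_
    have h2 := sgE_comp_le f i (n + t.length)
    calc (3/5:ℝ)^t.length * sgE (n + t.length) (f ∘ sgF i)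
        ≤ (3/5:ℝ)^t.length * ((3/5) * sgE (n + t.length + 1) f) :=
          mul_le_mul_of_nonneg_left h2 (by positivity)
      _ = (3/5:ℝ)^(i :: t).length * sgE (n + (i :: t).length) f := by
          simp only [List.length_cons, show n + (t.length + 1) = n + t.length + 1 from rfl]
          ring

lemma sgEtot_compw_le {f : ℝ × ℝ → ℝ} (hf : sgEtot f < ⊤) (w : List (Fin 3)) :
    sgEtot (f ∘ sgFw w) ≤ ENNReal.ofReal ((3/5)^w.length * (sgEtot f).toReal) := by
  refine iSup_le fun n => ENNReal.ofReal_le_ofReal ?_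
  exact (sgE_compw_le f w n).trans
    (mul_le_mul_of_nonneg_left (sgE_le_toReal hf _) (by positivity))

lemma sgEtot_compw_lt_top {f : ℝ × ℝ → ℝ} (hf : sgEtot f < ⊤) (w : List (Fin 3)) :
    sgEtot (f ∘ sgFw w) < ⊤ :=
  lt_of_le_of_lt (sgEtot_compw_le hf w) ENNReal.ofReal_lt_top

lemma sgEtot_compw_toReal {f : ℝ × ℝ → ℝ} (hf : sgEtot f < ⊤) (w : List (Fin 3)) :
    (sgEtot (f ∘ sgFw w)).toReal ≤ (3/5)^w.length * (sgEtot f).toReal := by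
  have := ENNReal.toReal_mono ENNReal.ofReal_ne_top (sgEtot_compw_le hf w)
  rwa [ENNReal.toReal_ofReal (by positivity)] at this

def sgβ : ℝ := Real.log (5/3) / (2 * Real.log 2)
def sgr : ℝ := Real.sqrt (3/5)

lemma sgr_pos : 0 < sgr := Real.sqrt_pos.2 (by norm_num)
lemma sgr_sq : sgr^2 = 3/5 := Real.sq_sqrt (by norm_num)
lemma sgr_lt_one : sgr < 1 := by nlinarith [sgr_sq, sgr_pos]

lemma sgβ_pos : 0 < sgβ :=
  div_pos (Real.log_pos (by norm_num)) (by positivity)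

lemma sgβ_le_one : sgβ ≤ 1 := by
  rw [sgβ, div_le_one (by positivity)]
  have h1 : Real.log (5/3) ≤ Real.log 4 :=
    Real.log_le_log (by norm_num) (by norm_num)
  have h2 : Real.log 4 = 2 * Real.log 2 := by
    rw [show (4:ℝ) = 2^2 by norm_num, Real.log_pow]; push_cast; ring
  linarith

lemma half_rpow : ((1:ℝ)/2) ^ sgβ = sgr := by
  have hl2 : Real.log 2 ≠ 0 := ne_of_gt (Real.log_pos (by norm_num))
  rw [sgr, Real.sqrt_eq_rpow, Real.rpow_def_of_pos (by norm_num : (0:ℝ) < 1/2),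
    Real.rpow_def_of_pos (by norm_num : (0:ℝ) < 3/5)]
  congr 1
  have h1 : Real.log (1/2) = -Real.log 2 := by
    rw [one_div, Real.log_inv]
  have h2 : Real.log (3/5) = -Real.log (5/3) := by
    rw [show (3:ℝ)/5 = ((5:ℝ)/3)⁻¹ by norm_num, Real.log_inv]
  rw [h1, h2, sgβ]
  field_simp

lemma adj_abs_le {f : ℝ × ℝ → ℝ} {n : ℕ} {x y : ℝ × ℝ}
    (hf : sgEtot f < ⊤) (h : sgAdj n x y) :
    |f y - f x| ≤ 2 * sgr^n * Real.sqrt (sgEtot f).toReal := by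
  have h1 := adj_sq_le hf h
  have hEnn : (0:ℝ) ≤ (sgEtot f).toReal := ENNReal.toReal_nonneg
  have hsq : (2 * sgr^n * Real.sqrt (sgEtot f).toReal)^2 = 4 * (3/5)^n * (sgEtot f).toReal := by
    rw [mul_pow, mul_pow, Real.sq_sqrt hEnn, ← pow_mul, mul_comm n 2, pow_mul, sgr_sq]
    ring
  have h2 : |f y - f x| = Real.sqrt ((f y - f x)^2) := (Real.sqrt_sq_eq_abs _).symm
  rw [h2]
  calc Real.sqrt ((f y - f x)^2) ≤ Real.sqrt (4*(3/5)^n*(sgEtot f).toReal) := Real.sqrt_le_sqrt h1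
    _ = 2 * sgr^n * Real.sqrt (sgEtot f).toReal := by
        rw [← hsq, Real.sqrt_sq (mul_nonneg (mul_nonneg (by norm_num)
          (pow_nonneg sgr_pos.le n)) (Real.sqrt_nonneg _))]

lemma geom_tail_le (n : ℕ) : ∑ k ∈ Finset.range n, sgr^(k+1) ≤ 1/(1 - sgr) := by
  have hr1 := sgr_lt_one
  have hr0 := sgr_pos
  have hmul := geom_sum_mul (x := sgr) n
  have hSg : ∑ k ∈ Finset.range n, sgr^(k+1) = sgr * ∑ k ∈ Finset.range n, sgr^k := by
    rw [Finset.mul_sum]; exact Finset.sum_congr rfl fun k _ => by ring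
  rw [hSg, le_div_iff₀ (by linarith)]
  have hpn : (0:ℝ) ≤ sgr^n := by positivity
  nlinarith [hmul, hpn, mul_nonneg hr0.le hpn]

lemma sgv1_eq : sgv1 = sgvtx 0 := rfl

lemma sgF0_v1 : sgF 0 sgv1 = sgv1 := sgF_fix 0

lemma sgF_v1_eq (i : Fin 3) : sgF i sgv1 = sgF 0 (sgvtx i) := by
  simp only [sgF, sgvtx, add_comm]

lemma mem_sgV0 (i : Fin 3) : sgvtx i ∈ sgV 0 := by
  fin_cases i <;> simp [sgV, sgvtx]

section OscDep
variable {K : Set (ℝ × ℝ)} (hKne : K.Nonempty) (hKcpt : IsCompact K)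
  (hKfix : K = ⋃ i : Fin 3, sgF i '' K)

include hKfix in
lemma contOn_comp {f : ℝ × ℝ → ℝ} (hf : ContinuousOn f K) (w : List (Fin 3)) :
    ContinuousOn (f ∘ sgFw w) K :=
  hf.comp (sgFw_cont w).continuousOn (fun _ hx => sgFw_memK hKfix hx)

include hKne hKcpt hKfix in
lemma osc_vertex {f : ℝ × ℝ → ℝ} (hf : ContinuousOn f K) (hE : sgEtot f < ⊤)
    {z : ℝ × ℝ} (hz : z ∈ K) :
    |f z - f sgv1| ≤ (2/(1 - sgr)) * Real.sqrt (sgEtot f).toReal := by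
  classical
  have hv1K : sgv1 ∈ K := vtx_memK hKne hKcpt hKfix 0
  set E := Real.sqrt (sgEtot f).toReal with hEdef
  have hE0 : 0 ≤ E := Real.sqrt_nonneg _
  have step : ∀ w : List (Fin 3), z ∈ sgFw w '' K → ∃ i, z ∈ sgFw (w ++ [i]) '' K := by
    rintro w ⟨y, hy, rfl⟩
    obtain ⟨i, u, hu, rfl⟩ := K_decomp hKfix hy
    exact ⟨i, u, hu, by rw [sgFw_append]; rfl⟩
  choose ι hι using step
  let W : ℕ → {w : List (Fin 3) // z ∈ sgFw w '' K} := fun n =>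
    Nat.rec ⟨[], ⟨z, hz, rfl⟩⟩ (fun _ p => ⟨p.1 ++ [ι p.1 p.2], hι p.1 p.2⟩) n
  have hWsucc : ∀ n, (W (n+1)).1 = (W n).1 ++ [ι (W n).1 (W n).2] := fun n => rfl
  have hlen : ∀ n, (W n).1.length = n := by
    intro n; induction n with
    | zero => rfl
    | succ n ih => rw [hWsucc, List.length_append, ih]; rfl
  set p : ℕ → ℝ × ℝ := fun n => sgFw (W n).1 sgv1 with hp
  have hpK : ∀ n, p n ∈ K := fun n => sgFw_memK hKfix hv1K
  have hp0 : p 0 = sgv1 := rfl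
  -- step estimate
  have hstep : ∀ n, |f (p (n+1)) - f (p n)| ≤ 2 * sgr^(n+1) * E := by
    intro n
    set i := ι (W n).1 (W n).2
    have e1 : p n = sgFw ((W n).1 ++ [(0 : Fin 3)]) sgv1 := by
      rw [sgFw_append]
      show sgFw (W n).1 sgv1 = sgFw (W n).1 (sgFw [(0:Fin 3)] sgv1)
      rw [show sgFw [(0:Fin 3)] sgv1 = sgv1 from sgF0_v1]
    have e2 : p (n+1) = sgFw ((W n).1 ++ [(0 : Fin 3)]) (sgvtx i) := by
      show sgFw ((W n).1 ++ [i]) sgv1 = _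
      rw [sgFw_append, sgFw_append]
      show sgFw (W n).1 (sgF i sgv1) = sgFw (W n).1 (sgF 0 (sgvtx i))
      rw [sgF_v1_eq]
    by_cases hne : p (n+1) = p n
    · rw [hne, sub_self, abs_zero]
      exact mul_nonneg (mul_nonneg (by norm_num) (pow_nonneg sgr_pos.le _)) hE0
    · have hadj : sgAdj (n+1) (p n) (p (n+1)) := by
        refine ⟨fun h => hne h.symm, (W n).1 ++ [(0:Fin 3)], by simp [hlen], ?_, ?_⟩
        · exact Finset.mem_image.2 ⟨sgv1, mem_sgV0 0, e1.symm⟩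
        · exact Finset.mem_image.2 ⟨sgvtx i, mem_sgV0 i, e2.symm⟩
      exact adj_abs_le hE hadj
  -- convergence
  have hdistz : ∀ n, dist (p n) z ≤ (1/2)^n := by
    intro n
    obtain ⟨y, hy, hzy⟩ := (W n).2
    rw [← hzy, hp]
    calc dist (sgFw (W n).1 sgv1) (sgFw (W n).1 y)
        = (1/2)^(W n).1.length * dist sgv1 y := sgFw_dist _ _ _
      _ ≤ (1/2)^n * 1 := by
          rw [hlen]
          exact mul_le_mul_of_nonneg_left
            (dist_le_one_of_mem_T (K_sub_T hKne hKcpt hKfix hv1K) (K_sub_T hKne hKcpt hKfix hy))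
            (by positivity)
      _ = (1/2)^n := mul_one _
  have hpz : Filter.Tendsto p Filter.atTop (nhds z) := by
    rw [tendsto_iff_dist_tendsto_zero]
    refine squeeze_zero (fun n => dist_nonneg) hdistz ?_
    exact tendsto_pow_atTop_nhds_zero_of_lt_one (by norm_num) (by norm_num)
  have hfz : Filter.Tendsto (fun n => f (p n)) Filter.atTop (nhds (f z)) := by
    refine ((hf z hz).tendsto).comp ?_
    rw [tendsto_nhdsWithin_iff]
    exact ⟨hpz, Filter.Eventually.of_forall hpK⟩
  -- partial sums
  have hpartial : ∀ n, |f (p n) - f sgv1| ≤ (2/(1 - sgr)) * E := by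
    intro n
    have htel := dist_le_range_sum_dist (fun k => f (p k)) n
    have hsum : ∑ k ∈ Finset.range n, dist (f (p k)) (f (p (k+1)))
        ≤ ∑ k ∈ Finset.range n, 2 * sgr^(k+1) * E := by
      refine Finset.sum_le_sum fun k _ => ?_
      rw [Real.dist_eq, abs_sub_comm]
      exact hstep k
    have hgeo : ∑ k ∈ Finset.range n, 2 * sgr^(k+1) * E ≤ 2/(1 - sgr) * E := by
      have h1 : ∑ k ∈ Finset.range n, 2 * sgr^(k+1) * E
          = (∑ k ∈ Finset.range n, sgr^(k+1)) * (2 * E) := by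
        rw [Finset.sum_mul]; exact Finset.sum_congr rfl fun k _ => by ring
      rw [h1]
      have := geom_tail_le n
      have h2 : (0:ℝ) ≤ 2 * E := by positivity
      calc (∑ k ∈ Finset.range n, sgr^(k+1)) * (2 * E) ≤ (1/(1-sgr)) * (2*E) :=
            mul_le_mul_of_nonneg_right this h2
        _ = 2/(1-sgr) * E := by ring
    calc |f (p n) - f sgv1| = dist (f (p 0)) (f (p n)) := by
          rw [hp0, Real.dist_eq, abs_sub_comm]
      _ ≤ _ := htel
      _ ≤ _ := hsum.trans hgeo
  -- pass to the limit
  have habs : Filter.Tendsto (fun n => |f (p n) - f sgv1|) Filter.atTop (nhds (|f z - f sgv1|)) :=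
    ((hfz.sub tendsto_const_nhds).abs)
  exact le_of_tendsto habs (Filter.Eventually.of_forall hpartial)

end OscDep

section CornerDep

lemma sgFw_replicate_fix (k : ℕ) (j : Fin 3) :
    sgFw (List.replicate k j) (sgvtx j) = sgvtx j := by
  induction k with
  | zero => rfl
  | succ k ih =>
    show sgF j (sgFw (List.replicate k j) (sgvtx j)) = sgvtx j
    rw [ih, sgF_fix]

lemma sqrt_cell_energy (k : ℕ) (E : ℝ) (hE : 0 ≤ E) :
    Real.sqrt ((3/5)^k * E) = sgr^k * Real.sqrt E := by
  rw [show (3/5:ℝ)^k = (sgr^k)^2 by rw [← pow_mul, mul_comm, pow_mul, sgr_sq],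
    Real.sqrt_mul (by positivity), Real.sqrt_sq (pow_nonneg sgr_pos.le k)]

lemma sgr_pow_rpow (k : ℕ) : sgr^k = ((1/2:ℝ)^k) ^ sgβ := by
  rw [← half_rpow, ← Real.rpow_natCast ((1/2:ℝ)^sgβ) k, ← Real.rpow_natCast (1/2:ℝ) k,
    ← Real.rpow_mul (by norm_num), ← Real.rpow_mul (by norm_num), mul_comm]

variable {K : Set (ℝ × ℝ)} (hKne : K.Nonempty) (hKcpt : IsCompact K)
  (hKfix : K = ⋃ i : Fin 3, sgF i '' K)

include hKne hKcpt hKfix in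
lemma corner {f : ℝ × ℝ → ℝ} (hf : ContinuousOn f K) (hE : sgEtot f < ⊤)
    (j : Fin 3) {z : ℝ × ℝ} (hz : z ∈ K) :
    |f z - f (sgvtx j)| ≤
      (12/(1 - sgr)) * Real.sqrt (sgEtot f).toReal * dist z (sgvtx j) ^ sgβ := by
  classical
  have hr1 := sgr_lt_one
  have hr0 := sgr_pos
  have hE0 : (0:ℝ) ≤ Real.sqrt (sgEtot f).toReal := Real.sqrt_nonneg _
  have hvjK : sgvtx j ∈ K := vtx_memK hKne hKcpt hKfix j
  by_cases hzj : z = sgvtx j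
  · rw [hzj, sub_self, abs_zero]
    have h0 : (0:ℝ) ≤ dist (sgvtx j) (sgvtx j) ^ sgβ := Real.rpow_nonneg dist_nonneg _
    have hr1 := sgr_lt_one
    exact mul_nonneg (mul_nonneg (div_nonneg (by norm_num) (by linarith)) hE0) h0
  have hd : 0 < dist z (sgvtx j) := dist_pos.2 hzj
  set d := dist z (sgvtx j) with hddef
  set P : ℕ → Prop := fun k => z ∈ sgFw (List.replicate k j) '' K with hPdef
  have hP0 : P 0 := ⟨z, hz, rfl⟩
  have hPd : ∀ k, P k → d ≤ (1/2)^k := by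
    rintro k ⟨y, hy, rfl⟩
    calc dist (sgFw (List.replicate k j) y) (sgvtx j)
        = dist (sgFw (List.replicate k j) y) (sgFw (List.replicate k j) (sgvtx j)) := by
          rw [sgFw_replicate_fix]
      _ = (1/2)^(List.replicate k j).length * dist y (sgvtx j) := sgFw_dist _ _ _
      _ ≤ (1/2)^k * 1 := by
          rw [List.length_replicate]
          exact mul_le_mul_of_nonneg_left
            (dist_le_one_of_mem_T (K_sub_T hKne hKcpt hKfix hy)
              (K_sub_T hKne hKcpt hKfix hvjK)) (by positivity)
      _ = (1/2)^k := mul_one _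
  obtain ⟨N, hN⟩ := exists_pow_lt_of_lt_one hd (by norm_num : (1/2:ℝ) < 1)
  set k := Nat.findGreatest P N with hkdef
  have hPk : P k := Nat.findGreatest_spec (Nat.zero_le N) hP0
  have hkN : k ≤ N := Nat.findGreatest_le N
  have hkltN : k < N := by
    rcases lt_or_eq_of_le hkN with h | h
    · exact h
    · exfalso
      have := hPd k hPk
      rw [h] at this
      linarith
  have hPk1 : ¬ P (k+1) := Nat.findGreatest_is_greatest (Nat.lt_succ_self k) hkltN
  obtain ⟨y, hy, hzy⟩ := hPk
  have hynotj : y ∉ sgF j '' K := by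
    intro ⟨u, hu, huy⟩
    refine hPk1 ⟨u, hu, ?_⟩
    rw [List.replicate_succ' (n := k), sgFw_append]
    show sgFw (List.replicate k j) (sgFw [j] u) = z
    rw [show sgFw [j] u = sgF j u from rfl, huy, hzy]
  obtain ⟨i, u, hu, hyu⟩ := K_decomp hKfix hy
  have hij : i ≠ j := by
    rintro rfl
    exact hynotj ⟨u, hu, hyu.symm⟩
  -- distance lower bound
  have hyT : y ∈ sgF i '' sgT := ⟨u, K_sub_T hKne hKcpt hKfix hu, hyu.symm⟩
  have hfar : (1/3:ℝ) ≤ dist y (sgvtx j) := vtx_far hij hyT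
  have hdk : d = (1/2)^k * dist y (sgvtx j) := by
    rw [hddef, ← hzy, ← sgFw_replicate_fix k j]
    rw [sgFw_dist, List.length_replicate, sgFw_replicate_fix]
  have hhalfk : (1/2:ℝ)^k ≤ 3 * d := by
    rw [hdk]
    nlinarith [pow_pos (by norm_num : (0:ℝ) < 1/2) k]
  -- oscillation estimate in the cell
  set g := f ∘ sgFw (List.replicate k j) with hgdef
  have hgc : ContinuousOn g K := contOn_comp hKfix hf _
  have hgE : sgEtot g < ⊤ := sgEtot_compw_lt_top hE _
  have hosc1 := osc_vertex hKne hKcpt hKfix hgc hgE hy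
  have hosc2 := osc_vertex hKne hKcpt hKfix hgc hgE hvjK
  have hval : |f z - f (sgvtx j)| = |g y - g (sgvtx j)| := by
    rw [hgdef]
    show |f z - f (sgvtx j)| = |f (sgFw (List.replicate k j) y) - f (sgFw (List.replicate k j) (sgvtx j))|
    rw [hzy, sgFw_replicate_fix]
  have hsplit : |g y - g (sgvtx j)| ≤ (4/(1-sgr)) * Real.sqrt (sgEtot g).toReal := by
    have := abs_sub_abs_le_abs_sub (g y - g sgv1) (g (sgvtx j) - g sgv1)
    calc |g y - g (sgvtx j)| = |(g y - g sgv1) - (g (sgvtx j) - g sgv1)| := by ring_nf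
      _ ≤ |g y - g sgv1| + |g (sgvtx j) - g sgv1| := abs_sub _ _
      _ ≤ (2/(1-sgr)) * Real.sqrt (sgEtot g).toReal + (2/(1-sgr)) * Real.sqrt (sgEtot g).toReal :=
          add_le_add hosc1 hosc2
      _ = (4/(1-sgr)) * Real.sqrt (sgEtot g).toReal := by ring
  have hgEbound : Real.sqrt (sgEtot g).toReal ≤ sgr^k * Real.sqrt (sgEtot f).toReal := by
    have h1 := sgEtot_compw_toReal hE (List.replicate k j)
    rw [List.length_replicate] at h1
    calc Real.sqrt (sgEtot g).toReal ≤ Real.sqrt ((3/5)^k * (sgEtot f).toReal) :=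
          Real.sqrt_le_sqrt h1
      _ = sgr^k * Real.sqrt (sgEtot f).toReal := sqrt_cell_energy k _ ENNReal.toReal_nonneg
  have hrk : sgr^k ≤ 3 * d ^ sgβ := by
    rw [sgr_pow_rpow]
    calc ((1/2:ℝ)^k) ^ sgβ ≤ (3*d) ^ sgβ :=
          Real.rpow_le_rpow (by positivity) hhalfk sgβ_pos.le
      _ = 3 ^ sgβ * d ^ sgβ := Real.mul_rpow (by norm_num) hd.le
      _ ≤ 3 * d ^ sgβ := by
          have h3 : (3:ℝ) ^ sgβ ≤ 3 := by
            calc (3:ℝ) ^ sgβ ≤ 3 ^ (1:ℝ) :=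
                  Real.rpow_le_rpow_of_exponent_le (by norm_num) sgβ_le_one
              _ = 3 := Real.rpow_one 3
          exact mul_le_mul_of_nonneg_right h3 (Real.rpow_nonneg hd.le _)
  calc |f z - f (sgvtx j)| = |g y - g (sgvtx j)| := hval
    _ ≤ (4/(1-sgr)) * Real.sqrt (sgEtot g).toReal := hsplit
    _ ≤ (4/(1-sgr)) * (sgr^k * Real.sqrt (sgEtot f).toReal) := by
        exact mul_le_mul_of_nonneg_left hgEbound (div_nonneg (by norm_num) (by linarith))
    _ ≤ (4/(1-sgr)) * ((3 * d ^ sgβ) * Real.sqrt (sgEtot f).toReal) := by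
        exact mul_le_mul_of_nonneg_left (mul_le_mul_of_nonneg_right hrk hE0)
          (div_nonneg (by norm_num) (by linarith))
    _ = (12/(1-sgr)) * Real.sqrt (sgEtot f).toReal * d ^ sgβ := by ring

end CornerDep

lemma key_pow (k : ℕ) {d : ℝ} (hd : 0 < d) :
    sgr^(k+1) * ((4 * 2^k * d) ^ sgβ) ≤ 2 * d ^ sgβ := by
  have h42 : (4:ℝ) * 2^k = 2^(k+2) := by rw [pow_add]; ring
  rw [h42, Real.mul_rpow (by positivity) hd.le, sgr_pow_rpow (k+1)]
  rw [← mul_assoc, ← Real.mul_rpow (by positivity) (by positivity)]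
  have hcan : ((1/2:ℝ)^(k+1) * 2^(k+2)) = 2 := by
    rw [one_div, inv_pow, pow_succ 2 (k+1)]
    calc ((2:ℝ)^(k+1))⁻¹ * (2^(k+1)*2) = ((2^(k+1):ℝ)⁻¹ * 2^(k+1)) * 2 := by ring
      _ = 2 := by rw [inv_mul_cancel₀ (by positivity), one_mul]
  rw [hcan]
  refine mul_le_mul_of_nonneg_right ?_ (Real.rpow_nonneg hd.le _)
  calc (2:ℝ) ^ sgβ ≤ 2 ^ (1:ℝ) := Real.rpow_le_rpow_of_exponent_le (by norm_num) sgβ_le_one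
    _ = 2 := Real.rpow_one 2

section MainDep

variable {K : Set (ℝ × ℝ)} (hKne : K.Nonempty) (hKcpt : IsCompact K)
  (hKfix : K = ⋃ i : Fin 3, sgF i '' K)

include hKne hKcpt hKfix in
lemma main_holder {f : ℝ × ℝ → ℝ} (hf : ContinuousOn f K) (hE : sgEtot f < ⊤)
    {x y : ℝ × ℝ} (hx : x ∈ K) (hy : y ∈ K) :
    |f x - f y| ≤ (48/(1 - sgr)) * Real.sqrt (sgEtot f).toReal * dist x y ^ sgβ := by
  classical
  have hr1 := sgr_lt_one
  have hr0 := sgr_pos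
  have hE0 : (0:ℝ) ≤ Real.sqrt (sgEtot f).toReal := Real.sqrt_nonneg _
  by_cases hxy : x = y
  · rw [hxy, sub_self, abs_zero, dist_self, Real.zero_rpow sgβ_pos.ne', mul_zero]
  have hd : 0 < dist x y := dist_pos.2 hxy
  set d := dist x y with hddef
  set Q : ℕ → Prop := fun k => ∃ w : List (Fin 3), w.length = k ∧
    x ∈ sgFw w '' K ∧ y ∈ sgFw w '' K with hQdef
  have hQ0 : Q 0 := ⟨[], rfl, ⟨x, hx, rfl⟩, ⟨y, hy, rfl⟩⟩
  have hQd : ∀ k, Q k → d ≤ (1/2)^k := by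
    rintro k ⟨w, hwl, ⟨a, ha, rfl⟩, ⟨b, hb, rfl⟩⟩
    calc dist (sgFw w a) (sgFw w b) = (1/2)^w.length * dist a b := sgFw_dist _ _ _
      _ ≤ (1/2)^k * 1 := by
          rw [hwl]
          exact mul_le_mul_of_nonneg_left
            (dist_le_one_of_mem_T (K_sub_T hKne hKcpt hKfix ha)
              (K_sub_T hKne hKcpt hKfix hb)) (by positivity)
      _ = (1/2)^k := mul_one _
  obtain ⟨N, hN⟩ := exists_pow_lt_of_lt_one hd (by norm_num : (1/2:ℝ) < 1)
  set k := Nat.findGreatest Q N with hkdef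
  have hQk : Q k := Nat.findGreatest_spec (Nat.zero_le N) hQ0
  have hkN : k ≤ N := Nat.findGreatest_le N
  have hkltN : k < N := by
    rcases lt_or_eq_of_le hkN with h | h
    · exact h
    · exfalso; have := hQd k hQk; rw [h] at this; linarith
  have hQk1 : ¬ Q (k+1) := Nat.findGreatest_is_greatest (Nat.lt_succ_self k) hkltN
  obtain ⟨w, hwl, ⟨x', hx', hxx⟩, ⟨y', hy', hyy⟩⟩ := hQk
  obtain ⟨i, x'', hx'', hxi⟩ := K_decomp hKfix hx'
  obtain ⟨jj, y'', hy'', hyj⟩ := K_decomp hKfix hy'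
  have hij : i ≠ jj := by
    rintro rfl
    exact hQk1 ⟨w ++ [i], by simp [hwl], ⟨x'', hx'', by rw [sgFw_append, ← hxx, hxi]; rfl⟩,
      ⟨y'', hy'', by rw [sgFw_append, ← hyy, hyj]; rfl⟩⟩
  -- geometry
  have hx'T : x' ∈ sgF i '' sgT := ⟨x'', K_sub_T hKne hKcpt hKfix hx'', hxi.symm⟩
  have hy'T : y' ∈ sgF jj '' sgT := ⟨y'', K_sub_T hKne hKcpt hKfix hy'', hyj.symm⟩
  have hsec1 : dist x' (sgF i (sgvtx jj)) ≤ 2 * dist x' y' := sector hij hx'T hy'T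
  have hsec2 : dist y' (sgF jj (sgvtx i)) ≤ 2 * dist x' y' := by
    rw [dist_comm x' y']
    exact sector hij.symm hy'T hx'T
  have hdxy' : dist x' y' = 2^k * d := by
    have h0 : d = (1/2)^k * dist x' y' := by
      rw [hddef, ← hxx, ← hyy, sgFw_dist, hwl]
    have h2 : (2:ℝ)^k * (1/2)^k = 1 := by rw [← mul_pow]; norm_num
    rw [h0, ← mul_assoc, h2, one_mul]
  have hdist1 : dist x'' (sgvtx jj) ≤ 4 * 2^k * d := by
    have h1 : dist x' (sgF i (sgvtx jj)) = (1/2) * dist x'' (sgvtx jj) := by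
      rw [hxi, sgF_dist]
    nlinarith [hsec1, hdxy', dist_nonneg (x := x'') (y := sgvtx jj)]
  have hdist2 : dist y'' (sgvtx i) ≤ 4 * 2^k * d := by
    have h1 : dist y' (sgF jj (sgvtx i)) = (1/2) * dist y'' (sgvtx i) := by
      rw [hyj, sgF_dist]
    nlinarith [hsec2, hdxy', dist_nonneg (x := y'') (y := sgvtx i)]
  -- two corner estimates
  have hm : sgF jj (sgvtx i) = sgF i (sgvtx jj) := sgF_vtx_symm jj i
  set m : ℝ × ℝ := sgFw w (sgF i (sgvtx jj)) with hmdef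
  have hc12 : (0:ℝ) ≤ 12/(1-sgr) := div_nonneg (by norm_num) (by linarith)
  set g1 : ℝ × ℝ → ℝ := f ∘ sgFw (w ++ [i]) with hg1def
  have hg1c : ContinuousOn g1 K := contOn_comp hKfix hf _
  have hg1E : sgEtot g1 < ⊤ := sgEtot_compw_lt_top hE _
  have hcor1 := corner hKne hKcpt hKfix hg1c hg1E jj hx''
  have hg1sqrt : Real.sqrt (sgEtot g1).toReal ≤ sgr^(k+1) * Real.sqrt (sgEtot f).toReal := by
    have h1 := sgEtot_compw_toReal hE (w ++ [i])
    have hlen : (w ++ [i]).length = k+1 := by simp [hwl]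
    rw [hlen] at h1
    calc Real.sqrt (sgEtot g1).toReal
        ≤ Real.sqrt ((3/5)^(k+1) * (sgEtot f).toReal) := Real.sqrt_le_sqrt h1
      _ = sgr^(k+1) * Real.sqrt (sgEtot f).toReal := sqrt_cell_energy _ _ ENNReal.toReal_nonneg
  have htermA : |f x - f m| ≤ (24/(1-sgr)) * Real.sqrt (sgEtot f).toReal * d ^ sgβ := by
    have hfx : g1 x'' = f x := by
      show f (sgFw (w ++ [i]) x'') = f x
      rw [sgFw_append]
      show f (sgFw w (sgF i x'')) = f x
      rw [← hxi, hxx]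
    have hfm : g1 (sgvtx jj) = f m := by
      show f (sgFw (w ++ [i]) (sgvtx jj)) = f m
      rw [sgFw_append]; rfl
    calc |f x - f m| = |g1 x'' - g1 (sgvtx jj)| := by rw [hfx, hfm]
      _ ≤ 12/(1-sgr) * Real.sqrt (sgEtot g1).toReal * dist x'' (sgvtx jj) ^ sgβ := hcor1
      _ ≤ 12/(1-sgr) * (sgr^(k+1) * Real.sqrt (sgEtot f).toReal) * ((4*2^k*d) ^ sgβ) := by
          refine mul_le_mul (mul_le_mul_of_nonneg_left hg1sqrt hc12)
            (Real.rpow_le_rpow dist_nonneg hdist1 sgβ_pos.le)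
            (Real.rpow_nonneg dist_nonneg _)
            (mul_nonneg hc12 (mul_nonneg (pow_nonneg hr0.le _) hE0))
      _ = 12/(1-sgr) * Real.sqrt (sgEtot f).toReal * (sgr^(k+1) * (4*2^k*d)^sgβ) := by ring
      _ ≤ 12/(1-sgr) * Real.sqrt (sgEtot f).toReal * (2 * d ^ sgβ) :=
          mul_le_mul_of_nonneg_left (key_pow k hd) (mul_nonneg hc12 hE0)
      _ = 24/(1-sgr) * Real.sqrt (sgEtot f).toReal * d ^ sgβ := by ring
  set g2 : ℝ × ℝ → ℝ := f ∘ sgFw (w ++ [jj]) with hg2def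
  have hg2c : ContinuousOn g2 K := contOn_comp hKfix hf _
  have hg2E : sgEtot g2 < ⊤ := sgEtot_compw_lt_top hE _
  have hcor2 := corner hKne hKcpt hKfix hg2c hg2E i hy''
  have hg2sqrt : Real.sqrt (sgEtot g2).toReal ≤ sgr^(k+1) * Real.sqrt (sgEtot f).toReal := by
    have h1 := sgEtot_compw_toReal hE (w ++ [jj])
    have hlen : (w ++ [jj]).length = k+1 := by simp [hwl]
    rw [hlen] at h1
    calc Real.sqrt (sgEtot g2).toReal
        ≤ Real.sqrt ((3/5)^(k+1) * (sgEtot f).toReal) := Real.sqrt_le_sqrt h1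
      _ = sgr^(k+1) * Real.sqrt (sgEtot f).toReal := sqrt_cell_energy _ _ ENNReal.toReal_nonneg
  have htermB : |f y - f m| ≤ (24/(1-sgr)) * Real.sqrt (sgEtot f).toReal * d ^ sgβ := by
    have hfy : g2 y'' = f y := by
      show f (sgFw (w ++ [jj]) y'') = f y
      rw [sgFw_append]
      show f (sgFw w (sgF jj y'')) = f y
      rw [← hyj, hyy]
    have hfm : g2 (sgvtx i) = f m := by
      show f (sgFw (w ++ [jj]) (sgvtx i)) = f m
      rw [sgFw_append]
      show f (sgFw w (sgF jj (sgvtx i))) = f m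
      rw [hm]
    calc |f y - f m| = |g2 y'' - g2 (sgvtx i)| := by rw [hfy, hfm]
      _ ≤ 12/(1-sgr) * Real.sqrt (sgEtot g2).toReal * dist y'' (sgvtx i) ^ sgβ := hcor2
      _ ≤ 12/(1-sgr) * (sgr^(k+1) * Real.sqrt (sgEtot f).toReal) * ((4*2^k*d) ^ sgβ) := by
          refine mul_le_mul (mul_le_mul_of_nonneg_left hg2sqrt hc12)
            (Real.rpow_le_rpow dist_nonneg hdist2 sgβ_pos.le)
            (Real.rpow_nonneg dist_nonneg _)
            (mul_nonneg hc12 (mul_nonneg (pow_nonneg hr0.le _) hE0))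
      _ = 12/(1-sgr) * Real.sqrt (sgEtot f).toReal * (sgr^(k+1) * (4*2^k*d)^sgβ) := by ring
      _ ≤ 12/(1-sgr) * Real.sqrt (sgEtot f).toReal * (2 * d ^ sgβ) :=
          mul_le_mul_of_nonneg_left (key_pow k hd) (mul_nonneg hc12 hE0)
      _ = 24/(1-sgr) * Real.sqrt (sgEtot f).toReal * d ^ sgβ := by ring
  calc |f x - f y| ≤ |f x - f m| + |f m - f y| := abs_sub_le _ _ _
    _ = |f x - f m| + |f y - f m| := by rw [abs_sub_comm (f m) (f y)]
    _ ≤ (24/(1-sgr)) * Real.sqrt (sgEtot f).toReal * d ^ sgβ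
        + (24/(1-sgr)) * Real.sqrt (sgEtot f).toReal * d ^ sgβ := add_le_add htermA htermB
    _ = (48/(1 - sgr)) * Real.sqrt (sgEtot f).toReal * d ^ sgβ := by ring

end MainDep

/-- a priori Hölder estimate, Lemma 2.2. There is `C > 0` such
that every `f ∈ C(K,ℝ)` of finite Dirichlet energy is `β`-Hölder with
`β = log(5/3)/(2 log 2)` and constant `C √(ℰ(f))`. -/
theorem statement7
    (K : Set (ℝ × ℝ)) (hKne : K.Nonempty) (hKcpt : IsCompact K)
    (hKfix : K = ⋃ i : Fin 3, sgF i '' K) :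
    ∃ C > (0:ℝ), ∀ f : ℝ × ℝ → ℝ, ContinuousOn f K → sgEtot f < ⊤ →
      ∀ x ∈ K, ∀ y ∈ K,
        |f x - f y| ≤
          C * Real.sqrt (sgEtot f).toReal *
            dist x y ^ (Real.log (5/3) / (2 * Real.log 2)) := by
  classical
  have hr1 := sgr_lt_one
  refine ⟨48/(1 - sgr), div_pos (by norm_num) (by linarith), ?_⟩
  intro f hf hE x hx y hy
  have h := main_holder hKne hKcpt hKfix hf hE hx hy
  rwa [show Real.log (5/3) / (2 * Real.log 2) = sgβ from rfl]


end
end
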